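/- arXiv:1606.06102 — 4 statements merged into one kernel-verified Lean document; each statement's English description precedes it below -/
import Mathlib

section
/- For every compact metric space Y, the family Apo(Y) of all nondegenerate aposyndetic subcontinua of Y and the family Col(Y) of all nondegenerate colocally connected subcontinua of Y are F_{σδ}-subsets of the hyperspace C(Y). -/
open Topology TopologicalSpace Metric Set Filter

/-- The Hilbert cube `[0,1]^ℕ` (with the product topology). -/
abbrev HCube : Type := ℕ → unitInterval

/-- The hyperspace `2^X` of nonempty compact subsets of `X`, with the Hausdorff metric. -/
abbrev Hyper (X : Type) [MetricSpace X] : Type := TopologicalSpace.NonemptyCompacts X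

/-- The hyperspace `C(X)` of subcontinua (nonempty compact connected subsets) of `X`. -/
abbrev Subcontinua (X : Type) [MetricSpace X] : Type :=
  {K : TopologicalSpace.NonemptyCompacts X // IsConnected (K : Set X)}

/-- A set is `F_σ` if it is a countable union of closed sets. -/
def IsFsigma {Z : Type} [TopologicalSpace Z] (A : Set Z) : Prop :=
  ∃ F : ℕ → Set Z, (∀ n, IsClosed (F n)) ∧ A = ⋃ n, F n

/-- A set is `F_{σδ}` if it is a countable intersection of `F_σ` sets. -/
def IsFsigmaDelta {Z : Type} [TopologicalSpace Z] (A : Set Z) : Prop :=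
  ∃ F : ℕ → Set Z, (∀ n, IsFsigma (F n)) ∧ A = ⋂ n, F n

/-- A set is in the class `D_2(F_σ)` if it is a difference of two `F_σ` sets. -/
def IsD2Fsigma {Z : Type} [TopologicalSpace Z] (A : Set Z) : Prop :=
  ∃ F G : Set Z, IsFsigma F ∧ IsFsigma G ∧ A = F \ G

/-- A set is coanalytic (`Π^1_1`) if its complement is analytic. -/
def IsCoanalytic {Z : Type} [TopologicalSpace Z] (A : Set Z) : Prop :=
  MeasureTheory.AnalyticSet Aᶜ

/-- A subset `S` of a space has finitely many connected components (as a subspace). -/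
def FinitelyManyComponents {Z : Type} [TopologicalSpace Z] (S : Set Z) : Prop :=
  {C : Set Z | ∃ x ∈ S, C = connectedComponentIn S x}.Finite

/-- A metric continuum is aposyndetic (equivalently, semi-locally connected) iff for every
`ε > 0` every point has an open neighborhood `U` of diameter `< ε` whose complement has
finitely many connected components. -/
def Aposyndetic (Z : Type) [MetricSpace Z] : Prop :=
  ∀ ε : ℝ, 0 < ε → ∀ z : Z, ∃ U : Set Z, IsOpen U ∧ z ∈ U ∧ Metric.diam U < ε ∧
    FinitelyManyComponents Uᶜ

/-- A metric continuum is colocally connected iff every point has arbitrarily small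
open neighborhoods with connected complement. -/
def ColocallyConnected (Z : Type) [MetricSpace Z] : Prop :=
  ∀ ε : ℝ, 0 < ε → ∀ z : Z, ∃ U : Set Z, IsOpen U ∧ z ∈ U ∧ Metric.diam U < ε ∧
    IsPreconnected (Uᶜ : Set Z)

/-- The family `Apo(Y)` of nondegenerate aposyndetic subcontinua of `Y`, in `C(Y)`. -/
def Apo (Y : Type) [MetricSpace Y] : Set (Subcontinua Y) :=
  {K | (K.1 : Set Y).Nontrivial ∧ Aposyndetic (K.1 : Set Y)}

/-- The family `Col(Y)` of nondegenerate colocally connected subcontinua of `Y`, in `C(Y)`. -/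
def Col (Y : Type) [MetricSpace Y] : Set (Subcontinua Y) :=
  {K | (K.1 : Set Y).Nontrivial ∧ ColocallyConnected (K.1 : Set Y)}

/-- A metric continuum `Z` is a Kelley continuum. -/
def KelleyContinuum (Z : Type) [MetricSpace Z] : Prop :=
  ∀ (z : Z) (zs : ℕ → Z), Tendsto zs atTop (nhds z) →
    ∀ W : Set Z, IsCompact W → IsConnected W → z ∈ W →
      ∃ Ws : ℕ → Set Z, (∀ n, IsCompact (Ws n) ∧ IsConnected (Ws n) ∧ zs n ∈ Ws n) ∧
        Tendsto (fun n => Metric.hausdorffDist (Ws n) W) atTop (nhds 0)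

/-- The family `K(X)` of Kelley subcontinua of `X`, in `C(X)`. -/
def KelleyFam (X : Type) [MetricSpace X] : Set (Subcontinua X) :=
  {K | KelleyContinuum (K.1 : Set X)}

/-- The family `LC(X)` of locally connected subcontinua of `X`, in `C(X)`. -/
def LCFam (X : Type) [MetricSpace X] : Set (Subcontinua X) :=
  {K | LocallyConnectedSpace (K.1 : Set X)}

/-- A subset `K` of `X` is a decomposable continuum if it is a union of two proper
subcontinua. -/
def DecomposableSet {X : Type} [TopologicalSpace X] (K : Set X) : Prop :=
  ∃ A B : Set X, IsCompact A ∧ IsConnected A ∧ IsCompact B ∧ IsConnected B ∧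
    A ∪ B = K ∧ A ≠ K ∧ B ≠ K

/-- The family `D(X)` of decomposable subcontinua of `X`, in `C(X)`. -/
def DecompFam (X : Type) [MetricSpace X] : Set (Subcontinua X) :=
  {K | DecomposableSet (K.1 : Set X)}

/-- Covering dimension at most `n`: every finite open cover has a finite open refinement
which still covers and in which every point belongs to at most `n + 1` members. -/
def CovDimLE (Z : Type) [TopologicalSpace Z] (n : ℕ) : Prop :=
  ∀ 𝒰 : Finset (Set Z), (∀ U ∈ 𝒰, IsOpen U) → ⋃₀ (𝒰 : Set (Set Z)) = Set.univ →
    ∃ 𝒱 : Finset (Set Z), (∀ V ∈ 𝒱, IsOpen V) ∧ ⋃₀ (𝒱 : Set (Set Z)) = Set.univ ∧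
      (∀ V ∈ 𝒱, ∃ U ∈ 𝒰, V ⊆ U) ∧
      ∀ z : Z, {V ∈ (𝒱 : Set (Set Z)) | z ∈ V}.ncard ≤ n + 1

/-- Covering dimension at least `n`. -/
def CovDimGE (Z : Type) [TopologicalSpace Z] (n : ℕ) : Prop :=
  ∀ m : ℕ, m + 1 ≤ n → ¬ CovDimLE Z m

/-- The family `D_n(X) ∩ C(X)` of subcontinua of covering dimension `≥ n`. -/
def DimGEFam (X : Type) [MetricSpace X] (n : ℕ) : Set (Subcontinua X) :=
  {K | CovDimGE (K.1 : Set X) n}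

/-- A closed subset `C` of a space `X` is a closed separator of `X`:
`X \ C` is a union of two disjoint nonempty open subsets of `X`. -/
def IsClosedSeparator {X : Type} [TopologicalSpace X] (C : Set X) : Prop :=
  IsClosed C ∧ ∃ U V : Set X, IsOpen U ∧ IsOpen V ∧ U.Nonempty ∧ V.Nonempty ∧
    Disjoint U V ∧ Cᶜ = U ∪ V

/-- The family `S(X)` of closed separators of `X`, viewed in the hyperspace `2^X`. -/
def SepFam (X : Type) [MetricSpace X] : Set (Hyper X) :=
  {K | IsClosedSeparator (K : Set X)}

/-- The family `S(X) ∩ C(X)` of subcontinua of `X` separating `X`, in `C(X)`. -/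
def SepSubcontFam (X : Type) [MetricSpace X] : Set (Subcontinua X) :=
  {K | IsClosedSeparator (K.1 : Set X)}

/-- The family `N(X)` of (nonempty compact) nowhere dense subsets of `X`, in `2^X`. -/
def NwdFam (X : Type) [MetricSpace X] : Set (Hyper X) :=
  {K | IsNowhereDense (K : Set X)}

/-- The family of nowhere dense subcontinua of `X`, in `C(X)`. -/
def NwdSubcontFam (X : Type) [MetricSpace X] : Set (Subcontinua X) :=
  {K | IsNowhereDense (K.1 : Set X)}

/-- A closed set `B` in a metric space `Q` (thought of as a Hilbert cube) is a `Z`-set: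
the identity can be approximated arbitrarily closely by maps missing `B`. -/
def IsZSet {Q : Type} [MetricSpace Q] (B : Set Q) : Prop :=
  IsClosed B ∧ ∀ ε : ℝ, 0 < ε → ∃ f : Q → Q, Continuous f ∧
    (∀ x : Q, f x ∉ B) ∧ ∀ x : Q, dist (f x) x < ε

/-- A `σZ`-set is a countable union of `Z`-sets. -/
def IsSigmaZSet {Q : Type} [MetricSpace Q] (B : Set Q) : Prop :=
  ∃ F : ℕ → Set Q, (∀ n, IsZSet (F n)) ∧ B = ⋃ n, F n

/-- `A ⊆ Q` is `M`-universal for the class `Cl` of subsets of the Hilbert cube: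
every `M₀ ⊆ [0,1]^ℕ` in the class is reduced to `A` by some embedding of the
Hilbert cube into `Q`. -/
def UniversalFor {Q : Type} [MetricSpace Q] (Cl : Set HCube → Prop) (A : Set Q) : Prop :=
  ∀ M : Set HCube, Cl M → ∃ f : HCube → Q, IsEmbedding f ∧ f ⁻¹' A = M

/-- `A ⊆ Q` is strongly `M`-universal for the class `Cl` of subsets of the Hilbert cube. -/
def StronglyUniversalFor {Q : Type} [MetricSpace Q] (Cl : Set HCube → Prop)
    (A : Set Q) : Prop :=
  ∀ M : Set HCube, Cl M → ∀ K : Set HCube, IsCompact K →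
    ∀ f : HCube → Q, IsEmbedding f → IsZSet (f '' K) →
      ∀ ε : ℝ, 0 < ε → ∃ g : HCube → Q, IsEmbedding g ∧
        IsZSet (Set.range g) ∧ (∀ x ∈ K, g x = f x) ∧
        g ⁻¹' A \ K = M \ K ∧ ∀ x : HCube, dist (g x) (f x) < ε

/-- `A ⊆ Q` is an absorber for the class given by `ClH` (on the Hilbert cube) and
`ClQ` (on `Q`): it belongs to the class, is contained in a `σZ`-set, and is
strongly universal for the class. -/
def IsAbsorberFor {Q : Type} [MetricSpace Q] (ClH : Set HCube → Prop)
    (ClQ : Set Q → Prop) (A : Set Q) : Prop :=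
  ClQ A ∧ (∃ B : Set Q, IsSigmaZSet B ∧ A ⊆ B) ∧ StronglyUniversalFor ClH A

/-- `C` is a closed separator of the space `Z` between `A` and `B`. -/
def SeparatesBetween {Z : Type} [TopologicalSpace Z] (C A B : Set Z) : Prop :=
  IsClosed C ∧ ∃ U V : Set Z, IsOpen U ∧ IsOpen V ∧ A ⊆ U ∧ B ⊆ V ∧
    Disjoint U V ∧ Cᶜ = U ∪ V

/-- A compact metric space is strongly infinite-dimensional if it has an essential
sequence of pairs of disjoint closed sets. -/
def StronglyInfiniteDimensional (Z : Type) [TopologicalSpace Z] : Prop :=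
  ∃ A B : ℕ → Set Z, (∀ n, IsClosed (A n) ∧ IsClosed (B n) ∧ Disjoint (A n) (B n)) ∧
    ∀ C : ℕ → Set Z, (∀ n, SeparatesBetween (C n) (A n) (B n)) → (⋂ n, C n).Nonempty

/-- The family `W_n(Y)` of weakly infinite-dimensional compacta in `Y` of covering
dimension `≥ n`, in `2^Y`. -/
def WFam (Y : Type) [MetricSpace Y] (n : ℕ) : Set (Hyper Y) :=
  {K | ¬ StronglyInfiniteDimensional (K : Set Y) ∧ CovDimGE (K : Set Y) n}

/-- A compact metric space is a `C`-space. -/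
def IsCSpace (Z : Type) [MetricSpace Z] : Prop :=
  ∀ ε : ℕ → ℝ, (∀ i, 0 < ε i) →
    ∃ (k : ℕ) (V : Fin k → Set (Set Z)),
      (∀ i : Fin k, (V i).Finite ∧ (∀ v ∈ V i, IsOpen v ∧ Metric.diam v < ε i.1) ∧
        (V i).Pairwise Disjoint) ∧
      (⋃ i : Fin k, ⋃₀ V i) = Set.univ

/-- The family `C_n(Y)` of compacta in `Y` of covering dimension `≥ n` which are
`C`-spaces, in `2^Y`. -/
def CFam (Y : Type) [MetricSpace Y] (n : ℕ) : Set (Hyper Y) :=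
  {K | IsCSpace (K : Set Y) ∧ CovDimGE (K : Set Y) n}

/-- A space is strongly countable-dimensional if it is a countable union of closed
finite-dimensional subspaces. -/
def StronglyCountableDimensional (Z : Type) [TopologicalSpace Z] : Prop :=
  ∃ F : ℕ → Set Z, (∀ k, IsClosed (F k) ∧ ∃ m : ℕ, CovDimLE (F k) m) ∧ (⋃ k, F k) = Set.univ

/-- The family `SCD_n(Y)` of strongly countable-dimensional compacta in `Y` of
covering dimension `≥ n`, in `2^Y`. -/
def SCDFam (Y : Type) [MetricSpace Y] (n : ℕ) : Set (Hyper Y) :=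
  {K | StronglyCountableDimensional (K : Set Y) ∧ CovDimGE (K : Set Y) n}

/-- A compact metric space is hereditarily infinite-dimensional if it is
infinite-dimensional and each nonempty closed subspace is infinite-dimensional or
zero-dimensional. -/
def HereditarilyInfiniteDimensional (Z : Type) [TopologicalSpace Z] : Prop :=
  (∀ m : ℕ, ¬ CovDimLE Z m) ∧
  ∀ F : Set Z, IsClosed F → F.Nonempty → (∀ m : ℕ, ¬ CovDimLE F m) ∨ CovDimLE F 0

/-- `A` is `Π^1_1`-hard: every coanalytic subset of every zero-dimensional Polish space
continuously reduces to `A`. -/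
def Pi11Hard {Z : Type} [TopologicalSpace Z] (A : Set Z) : Prop :=
  ∀ (Y₀ : Type) (_ : TopologicalSpace Y₀), PolishSpace Y₀ →
    TopologicalSpace.IsTopologicalBasis {s : Set Y₀ | IsClopen s} →
    ∀ C : Set Y₀, IsCoanalytic C → ∃ ξ : Y₀ → Z, Continuous ξ ∧ ξ ⁻¹' A = C

/-- `A` is `Π^1_1`-complete: coanalytic and `Π^1_1`-hard. -/
def Pi11Complete {Z : Type} [TopologicalSpace Z] (A : Set Z) : Prop :=
  IsCoanalytic A ∧ Pi11Hard A

section AuxSLC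

set_option linter.unusedSectionVars false
variable {Y : Type} [MetricSpace Y] [CompactSpace Y]

lemma hedist_ne_top (s t : Set Y) (hs : s.Nonempty) (ht : t.Nonempty) :
    EMetric.hausdorffEdist s t ≠ ⊤ :=
  Metric.hausdorffEdist_ne_top_of_nonempty_of_bounded hs ht
    (Bornology.IsBounded.subset (isCompact_univ.isBounded) (Set.subset_univ _))
    (Bornology.IsBounded.subset (isCompact_univ.isBounded) (Set.subset_univ _))

/-- Hausdorff limits of preconnected nonempty compacta are preconnected. -/
lemma preconn_limit (A : ℕ → NonemptyCompacts Y) (B : NonemptyCompacts Y)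
    (h : Tendsto A atTop (𝓝 B)) (hc : ∀ j, IsPreconnected (A j : Set Y)) :
    IsPreconnected (B : Set Y) := by
  intro u v hu hv hcov ⟨x, hxS, hxu⟩ ⟨y, hyS, hyv⟩
  by_contra hne
  rw [Set.not_nonempty_iff_eq_empty] at hne
  set S : Set Y := (B : Set Y)
  have hScpt : IsCompact S := B.isCompact
  -- the two disjoint compact pieces
  have hA : IsCompact (S \ v) := hScpt.inter_right hv.isClosed_compl
  have hB : IsCompact (S \ u) := hScpt.inter_right hu.isClosed_compl
  have hdisj : Disjoint (S \ v) (S \ u) := by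
    rw [Set.disjoint_left]
    rintro p ⟨hpS, hpv⟩ ⟨-, hpu⟩
    rcases hcov hpS with h | h
    exacts [hpu h, hpv h]
  obtain ⟨δ, hδ, hdisjth⟩ := hdisj.exists_thickenings hA hB.isClosed
  have hxA : x ∈ S \ v := ⟨hxS, fun hxv => by
    have : x ∈ S ∩ (u ∩ v) := ⟨hxS, hxu, hxv⟩
    simp [hne] at this⟩
  have hyB : y ∈ S \ u := ⟨hyS, fun hyu => by
    have : y ∈ S ∩ (u ∩ v) := ⟨hyS, hyu, hyv⟩
    simp [hne] at this⟩
  -- pick j with hausdorffDist (A j) S < δ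
  have hdist : Tendsto (fun j => dist (A j) B) atTop (𝓝 0) :=
    tendsto_iff_dist_tendsto_zero.1 h
  have hev : ∀ᶠ j in atTop, dist (A j) B < δ :=
    (hdist.eventually (gt_mem_nhds hδ))
  obtain ⟨j, hj⟩ := hev.exists
  rw [NonemptyCompacts.dist_eq] at hj
  have hnet : EMetric.hausdorffEdist (A j : Set Y) S ≠ ⊤ :=
    hedist_ne_top _ _ (A j).nonempty B.nonempty
  -- A j is contained in the union of the thickenings
  have hsub : (A j : Set Y) ⊆ thickening δ (S \ v) ∪ thickening δ (S \ u) := by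
    intro p hp
    have h1 : infDist p S ≤ hausdorffDist (A j : Set Y) S :=
      infDist_le_hausdorffDist_of_mem hp hnet
    have h2 : infDist p S < δ := lt_of_le_of_lt h1 hj
    have hpS : p ∈ thickening δ S := by
      rw [mem_thickening_iff_infDist_lt B.nonempty]; exact h2
    have : S = (S \ v) ∪ (S \ u) := by
      apply Set.eq_of_subset_of_subset
      · intro q hq
        rcases hcov hq with h | h
        · left; exact ⟨hq, fun hqv => by
            have : q ∈ S ∩ (u ∩ v) := ⟨hq, h, hqv⟩
            simp [hne] at this⟩
        · right; exact ⟨hq, fun hqu => by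
            have : q ∈ S ∩ (u ∩ v) := ⟨hq, hqu, h⟩
            simp [hne] at this⟩
      · exact Set.union_subset diff_subset diff_subset
    rw [this, thickening_union] at hpS
    exact hpS
  -- A j meets both thickenings
  have hmem1 : ((A j : Set Y) ∩ thickening δ (S \ v)).Nonempty := by
    have hx' : infDist x (A j : Set Y) ≤ hausdorffDist S (A j : Set Y) :=
      infDist_le_hausdorffDist_of_mem hxS (hedist_ne_top _ _ B.nonempty (A j).nonempty)
    rw [hausdorffDist_comm] at hx'
    have : infDist x (A j : Set Y) < δ := lt_of_le_of_lt hx' hj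
    obtain ⟨p, hp, hpd⟩ := (infDist_lt_iff (A j).nonempty).1 this
    exact ⟨p, hp, mem_thickening_iff.2 ⟨x, hxA, by rwa [dist_comm x p] at hpd⟩⟩
  have hmem2 : ((A j : Set Y) ∩ thickening δ (S \ u)).Nonempty := by
    have hy' : infDist y (A j : Set Y) ≤ hausdorffDist S (A j : Set Y) :=
      infDist_le_hausdorffDist_of_mem hyS (hedist_ne_top _ _ B.nonempty (A j).nonempty)
    rw [hausdorffDist_comm] at hy'
    have : infDist y (A j : Set Y) < δ := lt_of_le_of_lt hy' hj
    obtain ⟨p, hp, hpd⟩ := (infDist_lt_iff (A j).nonempty).1 this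
    exact ⟨p, hp, mem_thickening_iff.2 ⟨y, hyB, by rwa [dist_comm y p] at hpd⟩⟩
  obtain ⟨q, hq1, hq2, hq3⟩ := hc j _ _ isOpen_thickening isOpen_thickening hsub hmem1 hmem2
  exact (Set.disjoint_left.1 hdisjth) hq2 hq3

/-- `M` is a union of `k` (possibly empty) compact preconnected sets. -/
def PiecesK (k : ℕ) (M : Set Y) : Prop :=
  ∃ L : Fin k → Set Y, (∀ i, IsCompact (L i) ∧ IsPreconnected (L i)) ∧ M = ⋃ i, L i

lemma PiecesK.mono {k k' : ℕ} {M : Set Y} (hk : k ≤ k') (h : PiecesK k M) : PiecesK k' M := by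
  obtain ⟨L, hL, rfl⟩ := h
  classical
  refine ⟨fun j => if h : (j : ℕ) < k then L ⟨j, h⟩ else ∅, fun j => ?_, ?_⟩
  · by_cases h : (j : ℕ) < k
    · simpa [h] using hL ⟨j, h⟩
    · simp [h, isPreconnected_empty]
  · apply Set.eq_of_subset_of_subset
    · refine Set.iUnion_subset fun i => ?_
      have hik : (i : ℕ) < k' := lt_of_lt_of_le i.2 hk
      refine Set.subset_iUnion_of_subset ⟨i, hik⟩ ?_
      simp [i.2]
    · refine Set.iUnion_subset fun j => ?_
      by_cases h : (j : ℕ) < k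
      · refine le_of_eq_of_le (by simp [h]) (Set.subset_iUnion_of_subset ⟨j, h⟩ le_rfl)
      · simp [h]

lemma PiecesK.isCompact {k : ℕ} {M : Set Y} (h : PiecesK k M) : IsCompact M := by
  obtain ⟨L, hL, rfl⟩ := h
  exact isCompact_iUnion fun i => (hL i).1

/-- the quantitative condition at a point. -/
def GoodAt (c b : ℝ) (S : Set Y) (z : Y) (M : Set Y) : Prop :=
  M ⊆ S ∧ (∀ y ∈ M, b ≤ dist z y) ∧
    ∀ y ∈ S, y ∉ M → ∀ y' ∈ S, y' ∉ M → dist y y' ≤ c - b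

def FP (R : Set Y → Prop) (c b : ℝ) (S : Set Y) : Prop :=
  ∀ z ∈ S, ∃ M, R M ∧ GoodAt c b S z M

/-- Uniformization: a pointwise condition with slack gives a uniform `m` (and `k`),
by compactness. `R : ℕ → Set Y → Prop` is a monotone family of "shape" predicates. -/
lemma unif (R : ℕ → Set Y → Prop) (hmono : ∀ {k k' M}, k ≤ k' → R k M → R k' M)
    {S : Set Y} (hS : IsCompact S) (hne : S.Nonempty) {c : ℝ}
    (h : ∀ z ∈ S, ∃ k M ρ, 0 < ρ ∧ R k M ∧ GoodAt c ρ S z M) :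
    ∃ m k : ℕ, FP (R k) c (1 / (m + 1)) S := by
  classical
  -- choose data for points of S, as functions on the subtype
  have h' : ∀ z : S, ∃ k M ρ, 0 < ρ ∧ R k M ∧ GoodAt c ρ S (z : Y) M := fun z => h z z.2
  choose kf Mf ρf hρ hR hG using h'
  -- cover S by balls of radius ρ/2
  have hcov : S ⊆ ⋃ z : S, Metric.ball (z : Y) (ρf z / 2) := by
    intro z hz
    exact Set.mem_iUnion.2 ⟨⟨z, hz⟩, by simp [Metric.mem_ball, half_pos (hρ ⟨z, hz⟩)]⟩
  obtain ⟨t, ht⟩ := hS.elim_finite_subcover (fun z : S => Metric.ball (z : Y) (ρf z / 2))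
    (fun z => Metric.isOpen_ball) hcov
  have htne : t.Nonempty := by
    obtain ⟨z, hz⟩ := hne
    have := ht hz
    simp only [Set.mem_iUnion] at this
    obtain ⟨i, hi, -⟩ := this
    exact ⟨i, hi⟩
  -- uniform positive lower bound
  set δ : ℝ := t.inf' htne fun z => ρf z / 2 with hδdef
  have hδpos : 0 < δ := by
    rw [hδdef, Finset.lt_inf'_iff]
    exact fun z _ => half_pos (hρ z)
  obtain ⟨m, hm⟩ := exists_nat_one_div_lt hδpos
  refine ⟨m, t.sup kf, fun z hz => ?_⟩
  have hzcov := ht hz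
  simp only [Set.mem_iUnion, exists_prop] at hzcov
  obtain ⟨i, hit, hiball⟩ := hzcov
  have hδle : δ ≤ ρf i / 2 := Finset.inf'_le _ hit
  have hble : (1 : ℝ) / (m + 1) ≤ ρf i / 2 := le_trans hm.le hδle
  have hble' : (1 : ℝ) / (m + 1) ≤ ρf i := le_trans hble (by linarith [hρ i])
  obtain ⟨hsub, hdist, hpair⟩ := hG i
  refine ⟨Mf i, hmono (Finset.le_sup hit) (hR i), hsub, fun y hy => ?_, fun y hy hyM y' hy' hyM' => ?_⟩
  · have h1 : ρf i ≤ dist (i : Y) y := hdist y hy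
    have h2 : dist (i : Y) z < ρf i / 2 := by
      rw [Metric.mem_ball] at hiball; rw [dist_comm]; exact hiball
    calc (1 : ℝ) / (m + 1) ≤ ρf i / 2 := hble
    _ ≤ dist (i : Y) y - dist (i : Y) z := by linarith
    _ ≤ dist z y := by
        have := dist_triangle (i : Y) z y
        linarith
  · have := hpair y hy hyM y' hy' hyM'
    linarith

lemma closedFP (k : ℕ) (c b : ℝ) :
    IsClosed {K : Subcontinua Y | FP (PiecesK k) c b ((K.1 : Set Y))} := by
  classical
  rw [← isSeqClosed_iff_isClosed]
  intro Kj K hmem hlim z hz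
  set SK : Set Y := (K.1 : Set Y) with hSK
  have hD : Tendsto (fun j => hausdorffDist (((Kj j).1 : Set Y)) SK) atTop (𝓝 0) := by
    have := tendsto_iff_dist_tendsto_zero.1 hlim
    simpa [Subtype.dist_eq, NonemptyCompacts.dist_eq] using this
  -- nearest points to z
  have hwch : ∀ j, ∃ y ∈ ((Kj j).1 : Set Y), infDist z ((Kj j).1 : Set Y) = dist z y :=
    fun j => (Kj j).1.isCompact.exists_infDist_eq_dist (Kj j).1.nonempty z
  choose w hw hweq using hwch
  have hwz : Tendsto (fun j => dist (w j) z) atTop (𝓝 0) := by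
    apply squeeze_zero (fun j => dist_nonneg)
      (g := fun j => hausdorffDist (((Kj j).1 : Set Y)) SK) _ hD
    intro j
    rw [dist_comm, ← hweq j]
    have := infDist_le_hausdorffDist_of_mem (s := SK) (t := ((Kj j).1 : Set Y)) hz
      (hedist_ne_top _ _ K.1.nonempty (Kj j).1.nonempty)
    rwa [hausdorffDist_comm] at this
  have hwz' : Tendsto w atTop (𝓝 z) := tendsto_iff_dist_tendsto_zero.2 hwz
  -- witnesses
  have hwit : ∀ j, ∃ M, PiecesK k M ∧ GoodAt c b ((Kj j).1 : Set Y) (w j) M :=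
    fun j => hmem j (w j) (hw j)
  choose M hMp hMg using hwit
  choose L hL hMeq using hMp
  -- stabilize the pattern of empty pieces
  set e : ℕ → (Fin k → Bool) := fun j i => decide ((L j i).Nonempty) with he
  obtain ⟨p, hpinf⟩ := Finite.exists_infinite_fiber e
  have hinfset : (e ⁻¹' {p}).Infinite := Set.infinite_coe_iff.1 hpinf
  set φ0 : ℕ ↪ (e ⁻¹' {p}) := hinfset.natEmbedding
  set φ1 : ℕ → ℕ := fun n => (φ0 n : ℕ) with hφ1
  have hφ1inj : Function.Injective φ1 := fun a a' h => φ0.injective (Subtype.ext h)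
  have hφ1tend : Tendsto φ1 atTop atTop := hφ1inj.nat_tendsto_atTop
  have hpat : ∀ n, e (φ1 n) = p := fun n => (φ0 n).2
  -- extract convergent subsequence of the pieces
  set N : ℕ → (Fin k → NonemptyCompacts Y) := fun n i =>
    if h : (L (φ1 n) i).Nonempty then ⟨⟨L (φ1 n) i, (hL (φ1 n) i).1⟩, h⟩ else (Kj (φ1 n)).1
    with hN
  obtain ⟨Λ, φ, hφmono, hφtend⟩ := CompactSpace.tendsto_subseq N
  set ψ : ℕ → ℕ := fun n => φ1 (φ n) with hψ
  have hψtend : Tendsto ψ atTop atTop := hφ1tend.comp hφmono.tendsto_atTop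
  have hΛ : ∀ i, Tendsto (fun n => N (φ n) i) atTop (𝓝 (Λ i)) := fun i =>
    (tendsto_pi_nhds.1 hφtend) i
  have hpat' : ∀ n i, e (ψ n) i = p i := fun n i => by rw [hψ]; rw [hpat (φ n)]
  -- carrier identification for nonempty pattern
  have hcar : ∀ n i, p i = true → (N (φ n) i : Set Y) = L (ψ n) i := by
    intro n i hpi
    have hne : (L (φ1 (φ n)) i).Nonempty := by
      have := hpat' n i; rw [hpi] at this; exact of_decide_eq_true this
    show ((N (φ n) i : Set Y)) = L (φ1 (φ n)) i
    simp only [hN]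
    rw [dif_pos hne]
    rfl
  have hempty : ∀ n i, p i = false → L (ψ n) i = ∅ := by
    intro n i hpi
    have := hpat' n i; rw [hpi] at this
    have : ¬ (L (ψ n) i).Nonempty := of_decide_eq_false this
    exact Set.not_nonempty_iff_eq_empty.1 this
  have hconv : ∀ i, p i = true →
      Tendsto (fun n => hausdorffDist (L (ψ n) i) ((Λ i : Set Y))) atTop (𝓝 0) := by
    intro i hpi
    have := tendsto_iff_dist_tendsto_zero.1 (hΛ i)
    simp only [NonemptyCompacts.dist_eq] at this
    refine this.congr fun n => ?_
    rw [hcar n i hpi]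
  -- limits of Kj along ψ
  have hDψ : Tendsto (fun n => hausdorffDist (((Kj (ψ n)).1 : Set Y)) SK) atTop (𝓝 0) :=
    hD.comp hψtend
  have hwψ : Tendsto (fun n => dist (w (ψ n)) z) atTop (𝓝 0) := hwz.comp hψtend
  -- the limit pieces
  set Lf : Fin k → Set Y := fun i => if p i = true then ((Λ i : Set Y)) else ∅ with hLf
  refine ⟨⋃ i, Lf i, ⟨Lf, fun i => ?_, rfl⟩, ?_, ?_, ?_⟩
  · by_cases hpi : p i = true
    · simp only [hLf, if_pos hpi]
      refine ⟨(Λ i).isCompact, ?_⟩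
      refine preconn_limit (fun n => N (φ n) i) (Λ i) (hΛ i) (fun n => ?_)
      rw [hcar n i hpi]
      exact (hL (ψ n) i).2
    · simp [hLf, hpi, isPreconnected_empty]
  · -- union contained in SK
    refine Set.iUnion_subset fun i x hx => ?_
    by_cases hpi : p i = true
    · rw [hLf] at hx; simp only [if_pos hpi] at hx
      have hble : ∀ n, infDist x SK ≤
          hausdorffDist ((Λ i : Set Y)) (L (ψ n) i) + hausdorffDist (((Kj (ψ n)).1 : Set Y)) SK := by
        intro n
        have hLne : (L (ψ n) i).Nonempty := by
          have := hpat' n i; rw [hpi] at this; exact of_decide_eq_true this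
        have hLsub : L (ψ n) i ⊆ ((Kj (ψ n)).1 : Set Y) := by
          intro q hq
          exact (hMg (ψ n)).1 ((hMeq (ψ n)).symm ▸ Set.mem_iUnion.2 ⟨i, hq⟩)
        have h1 : infDist x ((Kj (ψ n)).1 : Set Y) ≤ infDist x (L (ψ n) i) :=
          infDist_le_infDist_of_subset hLsub hLne
        have h2 : infDist x (L (ψ n) i) ≤ infDist x ((Λ i : Set Y)) +
            hausdorffDist ((Λ i : Set Y)) (L (ψ n) i) :=
          infDist_le_infDist_add_hausdorffDist (hedist_ne_top _ _ (Λ i).nonempty hLne)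
        have h3 : infDist x SK ≤ infDist x ((Kj (ψ n)).1 : Set Y) +
            hausdorffDist (((Kj (ψ n)).1 : Set Y)) SK :=
          infDist_le_infDist_add_hausdorffDist (hedist_ne_top _ _ (Kj (ψ n)).1.nonempty K.1.nonempty)
        rw [infDist_zero_of_mem hx] at h2
        linarith
      have htt : Tendsto (fun n => hausdorffDist ((Λ i : Set Y)) (L (ψ n) i) +
          hausdorffDist (((Kj (ψ n)).1 : Set Y)) SK) atTop (𝓝 0) := by
        have := ((hconv i hpi).congr (fun n => hausdorffDist_comm)).add hDψ
        simpa using this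
      have : infDist x SK ≤ 0 := ge_of_tendsto htt (Eventually.of_forall hble)
      exact (K.1.isCompact.isClosed.mem_iff_infDist_zero K.1.nonempty).2
        (le_antisymm this infDist_nonneg)
    · rw [hLf] at hx; simp [if_neg hpi] at hx
  · -- distance from z to the pieces
    intro y hy
    obtain ⟨i, hyi⟩ := Set.mem_iUnion.1 hy
    by_cases hpi : p i = true
    swap
    · rw [hLf] at hyi; simp [if_neg hpi] at hyi
    rw [hLf] at hyi; simp only [if_pos hpi] at hyi
    have hLne : ∀ n, (L (ψ n) i).Nonempty := by
      intro n; have := hpat' n i; rw [hpi] at this; exact of_decide_eq_true this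
    have hych : ∀ n, ∃ q ∈ L (ψ n) i, infDist y (L (ψ n) i) = dist y q :=
      fun n => ((hL (ψ n) i).1).exists_infDist_eq_dist (hLne n) y
    choose yn hyn hyneq using hych
    have hynd : Tendsto (fun n => dist y (yn n)) atTop (𝓝 0) := by
      apply squeeze_zero (fun n => dist_nonneg)
        (g := fun n => hausdorffDist ((Λ i : Set Y)) (L (ψ n) i)) _
        ((hconv i hpi).congr (fun n => hausdorffDist_comm))
      intro n
      rw [← hyneq n]
      have h2 : infDist y (L (ψ n) i) ≤ infDist y ((Λ i : Set Y)) +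
          hausdorffDist ((Λ i : Set Y)) (L (ψ n) i) :=
        infDist_le_infDist_add_hausdorffDist (hedist_ne_top _ _ (Λ i).nonempty (hLne n))
      rwa [infDist_zero_of_mem hyi, zero_add] at h2
    have hbound : ∀ n, b ≤ dist z y + (dist (w (ψ n)) z + dist y (yn n)) := by
      intro n
      have hmem' : yn n ∈ M (ψ n) := (hMeq (ψ n)).symm ▸ Set.mem_iUnion.2 ⟨i, hyn n⟩
      have h1 : b ≤ dist (w (ψ n)) (yn n) := (hMg (ψ n)).2.1 (yn n) hmem'
      have h2 := dist_triangle (w (ψ n)) z (yn n)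
      have h3 := dist_triangle z y (yn n)
      linarith
    have htt : Tendsto (fun n => dist z y + (dist (w (ψ n)) z + dist y (yn n)))
        atTop (𝓝 (dist z y)) := by
      have := hwψ.add hynd
      have := (tendsto_const_nhds (x := dist z y) (f := atTop (α := ℕ))).add this
      simpa using this
    exact ge_of_tendsto htt (Eventually.of_forall hbound)
  · -- pairs far from the pieces
    intro y hy hyM y' hy' hyM'
    -- nearest points in Kj (ψ n)
    have hych : ∀ n, ∃ q ∈ ((Kj (ψ n)).1 : Set Y), infDist y ((Kj (ψ n)).1 : Set Y) = dist y q :=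
      fun n => (Kj (ψ n)).1.isCompact.exists_infDist_eq_dist (Kj (ψ n)).1.nonempty y
    have hych' : ∀ n, ∃ q ∈ ((Kj (ψ n)).1 : Set Y), infDist y' ((Kj (ψ n)).1 : Set Y) = dist y' q :=
      fun n => (Kj (ψ n)).1.isCompact.exists_infDist_eq_dist (Kj (ψ n)).1.nonempty y'
    choose yn hyn hyneq using hych
    choose yn' hyn' hyneq' using hych'
    have hget : ∀ (q : Y), q ∈ SK → Tendsto (fun n => infDist q ((Kj (ψ n)).1 : Set Y)) atTop (𝓝 0) := by
      intro q hq
      apply squeeze_zero (fun n => infDist_nonneg)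
        (g := fun n => hausdorffDist (((Kj (ψ n)).1 : Set Y)) SK) _ hDψ
      intro n
      have := infDist_le_hausdorffDist_of_mem (s := SK) (t := ((Kj (ψ n)).1 : Set Y)) hq
        (hedist_ne_top _ _ K.1.nonempty (Kj (ψ n)).1.nonempty)
      rwa [hausdorffDist_comm] at this
    have hynd : Tendsto (fun n => dist y (yn n)) atTop (𝓝 0) := by
      refine (hget y hy).congr fun n => hyneq n
    have hynd' : Tendsto (fun n => dist y' (yn' n)) atTop (𝓝 0) := by
      refine (hget y' hy').congr fun n => hyneq' n
    -- eventually the nearest points avoid all pieces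
    have hav : ∀ᶠ n in atTop, ∀ i, yn n ∉ L (ψ n) i := by
      rw [eventually_all]
      intro i
      by_cases hpi : p i = true
      swap
      · refine Eventually.of_forall fun n => ?_
        rw [hempty n i (by simpa using hpi)]; exact Set.notMem_empty _
      · have hyΛ : y ∉ ((Λ i : Set Y)) := by
          intro hcon
          exact hyM (Set.mem_iUnion.2 ⟨i, by rw [hLf]; simpa [if_pos hpi] using hcon⟩)
        have hr : 0 < infDist y ((Λ i : Set Y)) :=
          ((Λ i).isCompact.isClosed.notMem_iff_infDist_pos (Λ i).nonempty).1 hyΛ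
        have h1 : ∀ᶠ n in atTop, dist y (yn n) < infDist y ((Λ i : Set Y)) / 2 :=
          hynd.eventually (gt_mem_nhds (by linarith))
        have h2 : ∀ᶠ n in atTop, hausdorffDist (L (ψ n) i) ((Λ i : Set Y)) <
            infDist y ((Λ i : Set Y)) / 2 :=
          (hconv i hpi).eventually (gt_mem_nhds (by linarith))
        filter_upwards [h1, h2] with n h1n h2n hcon
        have hLne : (L (ψ n) i).Nonempty := ⟨yn n, hcon⟩
        have h3 : infDist (yn n) ((Λ i : Set Y)) ≤ hausdorffDist (L (ψ n) i) ((Λ i : Set Y)) :=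
          infDist_le_hausdorffDist_of_mem hcon (hedist_ne_top _ _ hLne (Λ i).nonempty)
        have h4 : infDist y ((Λ i : Set Y)) ≤ infDist (yn n) ((Λ i : Set Y)) + dist y (yn n) :=
          infDist_le_infDist_add_dist
        linarith
    have hav' : ∀ᶠ n in atTop, ∀ i, yn' n ∉ L (ψ n) i := by
      rw [eventually_all]
      intro i
      by_cases hpi : p i = true
      swap
      · refine Eventually.of_forall fun n => ?_
        rw [hempty n i (by simpa using hpi)]; exact Set.notMem_empty _
      · have hyΛ : y' ∉ ((Λ i : Set Y)) := by
          intro hcon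
          exact hyM' (Set.mem_iUnion.2 ⟨i, by rw [hLf]; simpa [if_pos hpi] using hcon⟩)
        have hr : 0 < infDist y' ((Λ i : Set Y)) :=
          ((Λ i).isCompact.isClosed.notMem_iff_infDist_pos (Λ i).nonempty).1 hyΛ
        have h1 : ∀ᶠ n in atTop, dist y' (yn' n) < infDist y' ((Λ i : Set Y)) / 2 :=
          hynd'.eventually (gt_mem_nhds (by linarith))
        have h2 : ∀ᶠ n in atTop, hausdorffDist (L (ψ n) i) ((Λ i : Set Y)) <
            infDist y' ((Λ i : Set Y)) / 2 :=
          (hconv i hpi).eventually (gt_mem_nhds (by linarith))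
        filter_upwards [h1, h2] with n h1n h2n hcon
        have hLne : (L (ψ n) i).Nonempty := ⟨yn' n, hcon⟩
        have h3 : infDist (yn' n) ((Λ i : Set Y)) ≤ hausdorffDist (L (ψ n) i) ((Λ i : Set Y)) :=
          infDist_le_hausdorffDist_of_mem hcon (hedist_ne_top _ _ hLne (Λ i).nonempty)
        have h4 : infDist y' ((Λ i : Set Y)) ≤ infDist (yn' n) ((Λ i : Set Y)) + dist y' (yn' n) :=
          infDist_le_infDist_add_dist
        linarith
    have hbound : ∀ᶠ n in atTop,
        dist y y' ≤ (c - b) + (dist y (yn n) + dist y' (yn' n)) := by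
      filter_upwards [hav, hav'] with n h1n h2n
      have hnM : yn n ∉ M (ψ n) := by
        rw [hMeq (ψ n)]
        intro hcon
        obtain ⟨i, hi⟩ := Set.mem_iUnion.1 hcon
        exact h1n i hi
      have hnM' : yn' n ∉ M (ψ n) := by
        rw [hMeq (ψ n)]
        intro hcon
        obtain ⟨i, hi⟩ := Set.mem_iUnion.1 hcon
        exact h2n i hi
      have hpp : dist (yn n) (yn' n) ≤ c - b :=
        (hMg (ψ n)).2.2 (yn n) (hyn n) hnM (yn' n) (hyn' n) hnM'
      have t1 := dist_triangle y (yn n) (yn' n)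
      have t2 := dist_triangle (yn n) (yn' n) y'
      have t3 := dist_triangle y (yn n) y'
      have : dist y y' ≤ dist y (yn n) + dist (yn n) (yn' n) + dist (yn' n) y' :=
        dist_triangle4 y (yn n) (yn' n) y'
      rw [dist_comm (yn' n) y'] at this
      linarith
    have htt : Tendsto (fun n => (c - b) + (dist y (yn n) + dist y' (yn' n)))
        atTop (𝓝 (c - b)) := by
      have := (tendsto_const_nhds (x := c - b) (f := atTop (α := ℕ))).add (hynd.add hynd')
      simpa using this
    exact ge_of_tendsto htt hbound

/-- From finitely many components of a closed subset of a compact subspace,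
produce a pieces decomposition of the image in `Y`. -/
lemma pieces_of_fmc {S : Set Y} (hS : IsCompact S) {T : Set ↥S} (hT : IsClosed T)
    (h : FinitelyManyComponents T) :
    ∃ k, PiecesK k ((Subtype.val '' T : Set Y)) := by
  haveI : CompactSpace ↥S := isCompact_iff_compactSpace.mp hS
  have hTc : IsCompact T := hT.isCompact
  haveI : CompactSpace ↥T := isCompact_iff_compactSpace.mp hTc
  have himfin : ((fun C : Set ↥S => (Subtype.val '' C : Set Y)) ''
      {C : Set ↥S | ∃ x ∈ T, C = connectedComponentIn T x}).Finite := h.image _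
  obtain ⟨k, f, -, hfr⟩ := himfin.fin_param
  refine ⟨k, f, fun i => ?_, ?_⟩
  · have : f i ∈ _ := hfr ▸ Set.mem_range_self i
    obtain ⟨C, ⟨x, hxT, hCx⟩, hfi⟩ := this
    subst hCx
    have hCcpt : IsCompact (connectedComponentIn T x) := by
      rw [connectedComponentIn_eq_image hxT]
      exact (isClosed_connectedComponent.isCompact).image continuous_subtype_val
    have hCpre : IsPreconnected (connectedComponentIn T x) := isPreconnected_connectedComponentIn
    exact hfi ▸ ⟨hCcpt.image continuous_subtype_val,
      hCpre.image _ continuous_subtype_val.continuousOn⟩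
  · apply Set.eq_of_subset_of_subset
    · rintro y ⟨q, hqT, rfl⟩
      have hmem : (Subtype.val '' connectedComponentIn T q : Set Y) ∈ Set.range f := by
        rw [hfr]; exact ⟨connectedComponentIn T q, ⟨q, hqT, rfl⟩, rfl⟩
      obtain ⟨i, hi⟩ := hmem
      exact Set.mem_iUnion.2 ⟨i, hi ▸ Set.mem_image_of_mem _ (mem_connectedComponentIn hqT)⟩
    · refine Set.iUnion_subset fun i => ?_
      have : f i ∈ _ := hfr ▸ Set.mem_range_self i
      obtain ⟨C, ⟨x, hxT, hCx⟩, hfi⟩ := this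
      rw [← hfi, hCx]
      exact Set.image_mono (connectedComponentIn_subset T x)

/-- Conversely, a pieces decomposition yields finitely many components of the preimage. -/
lemma fmc_of_pieces {S : Set Y} {k : ℕ} {L : Fin k → Set Y} (hL : ∀ i, IsPreconnected (L i))
    (hsub : ∀ i, L i ⊆ S) :
    FinitelyManyComponents ((Subtype.val ⁻¹' (⋃ i, L i) : Set ↥S)) := by
  set T : Set ↥S := Subtype.val ⁻¹' (⋃ i, L i) with hT
  have hpre : ∀ i, IsPreconnected ((Subtype.val ⁻¹' L i : Set ↥S)) := by
    intro i
    rw [← Topology.IsInducing.subtypeVal.isPreconnected_image]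
    rw [Subtype.image_preimage_coe]
    rw [Set.inter_eq_right.2 (hsub i)]
    exact hL i
  have hTsub : ∀ i, (Subtype.val ⁻¹' L i : Set ↥S) ⊆ T := fun i q hq =>
    Set.mem_preimage.2 (Set.mem_iUnion.2 ⟨i, hq⟩)
  have hsubs : {C : Set ↥S | ∃ x ∈ T, C = connectedComponentIn T x} ⊆
      ⋃ i, {C : Set ↥S | ∃ x ∈ (Subtype.val ⁻¹' L i : Set ↥S), C = connectedComponentIn T x} := by
    rintro C ⟨x, hxT, rfl⟩
    obtain ⟨i, hi⟩ := Set.mem_iUnion.1 (Set.mem_preimage.1 hxT)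
    exact Set.mem_iUnion.2 ⟨i, ⟨x, hi, rfl⟩⟩
  refine Set.Finite.subset (Set.finite_iUnion fun i => ?_) hsubs
  apply Set.Subsingleton.finite
  rintro C ⟨x, hx, rfl⟩ C' ⟨x', hx', rfl⟩
  have h1 : (Subtype.val ⁻¹' L i : Set ↥S) ⊆ connectedComponentIn T x :=
    (hpre i).subset_connectedComponentIn hx (hTsub i)
  exact connectedComponentIn_eq (h1 hx')

/-- membership transfer for images of complements. -/
lemma not_mem_image_compl {S : Set Y} {U : Set ↥S} {y : Y} (hy : y ∈ S) :
    y ∉ (Subtype.val '' Uᶜ : Set Y) ↔ (⟨y, hy⟩ : ↥S) ∈ U := by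
  constructor
  · intro h
    by_contra hc
    exact h ⟨⟨y, hy⟩, hc, rfl⟩
  · rintro hU ⟨q, hq, hqy⟩
    exact hq (by rwa [show q = (⟨y, hy⟩ : ↥S) from Subtype.ext hqy])

/-- From a small open neighborhood in the subspace to quantitative data. -/
lemma goodAt_of_openU {S : Set Y} (hS : IsCompact S) {z : Y} (hz : z ∈ S) {U : Set ↥S}
    (hUo : IsOpen U) (hzU : (⟨z, hz⟩ : ↥S) ∈ U) {c : ℝ} (hdiam : Metric.diam U < c) :
    ∃ ρ, 0 < ρ ∧ GoodAt c ρ S z (Subtype.val '' Uᶜ) := by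
  haveI : CompactSpace ↥S := isCompact_iff_compactSpace.mp hS
  set M : Set Y := Subtype.val '' Uᶜ with hM
  have hMcpt : IsCompact M := (hUo.isClosed_compl.isCompact).image continuous_subtype_val
  have hMsub : M ⊆ S := Subtype.coe_image_subset S Uᶜ
  have hzM : z ∉ M := (not_mem_image_compl hz).2 hzU
  have hUbd : Bornology.IsBounded U := (isCompact_univ.isBounded).subset (Set.subset_univ U)
  have hpair : ∀ y ∈ S, y ∉ M → ∀ y' ∈ S, y' ∉ M → dist y y' ≤ Metric.diam U := by
    intro y hy hyM y' hy' hyM'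
    have h1 : (⟨y, hy⟩ : ↥S) ∈ U := (not_mem_image_compl hy).1 hyM
    have h2 : (⟨y', hy'⟩ : ↥S) ∈ U := (not_mem_image_compl hy').1 hyM'
    have := Metric.dist_le_diam_of_mem hUbd h1 h2
    rwa [Subtype.dist_eq] at this
  by_cases hMne : M.Nonempty
  · have hpos : 0 < infDist z M :=
      (hMcpt.isClosed.notMem_iff_infDist_pos hMne).1 hzM
    refine ⟨min (infDist z M) (c - Metric.diam U), lt_min hpos (by linarith), hMsub,
      fun y hy => le_trans (min_le_left _ _) (infDist_le_dist_of_mem hy), ?_⟩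
    intro y hy hyM y' hy' hyM'
    have := hpair y hy hyM y' hy' hyM'
    have h2 : min (infDist z M) (c - Metric.diam U) ≤ c - Metric.diam U := min_le_right _ _
    linarith
  · refine ⟨c - Metric.diam U, by linarith, hMsub, fun y hy => absurd ⟨y, hy⟩ hMne, ?_⟩
    intro y hy hyM y' hy' hyM'
    have := hpair y hy hyM y' hy' hyM'
    linarith

/-- From quantitative data to a small open neighborhood in the subspace. -/
lemma openU_of_goodAt {S : Set Y} (hS : IsCompact S) {z : Y} (hz : z ∈ S) {M : Set Y}
    (hM : IsCompact M) {c b : ℝ} (hb : 0 < b) (hg : GoodAt c b S z M) :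
    IsOpen ((Subtype.val ⁻¹' M : Set ↥S))ᶜ ∧ (⟨z, hz⟩ : ↥S) ∈ (Subtype.val ⁻¹' M)ᶜ ∧
      Metric.diam ((Subtype.val ⁻¹' M : Set ↥S)ᶜ) ≤ c - b := by
  obtain ⟨hMS, hdist, hpair⟩ := hg
  have hzM : z ∉ M := by
    intro hc
    have := hdist z hc
    simp at this
    linarith
  have hcb : 0 ≤ c - b := by
    simpa using hpair z hz hzM z hz hzM
  refine ⟨(hM.isClosed.preimage continuous_subtype_val).isOpen_compl, by simpa using hzM, ?_⟩
  apply Metric.diam_le_of_forall_dist_le hcb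
  intro p hp q hq
  rw [Subtype.dist_eq]
  exact hpair p.1 p.2 (by simpa using hp) q.1 q.2 (by simpa using hq)

lemma apo_dir1 {S : Set Y} (hS : IsCompact S) (hne : S.Nonempty) (h : Aposyndetic ↥S)
    {c : ℝ} (hc : 0 < c) : ∃ m k : ℕ, FP (PiecesK k) c (1 / (m + 1)) S := by
  apply unif PiecesK (fun hkk hp => hp.mono hkk) hS hne
  intro z hz
  obtain ⟨U, hUo, hzU, hUd, hUf⟩ := h c hc ⟨z, hz⟩
  obtain ⟨ρ, hρ, hg⟩ := goodAt_of_openU hS hz hUo hzU hUd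
  obtain ⟨k, hk⟩ := pieces_of_fmc hS hUo.isClosed_compl hUf
  exact ⟨k, Subtype.val '' Uᶜ, ρ, hρ, hk, hg⟩

lemma apo_dir2 {S : Set Y} (hS : IsCompact S)
    (h : ∀ c : ℝ, 0 < c → ∃ (b : ℝ) (k : ℕ), 0 < b ∧ FP (PiecesK k) c b S) :
    Aposyndetic ↥S := by
  intro ε hε z
  obtain ⟨b, k, hb, hF⟩ := h ε hε
  obtain ⟨M, hMp, hMg⟩ := hF z.1 z.2
  obtain ⟨hUo, hzU, hUd⟩ := openU_of_goodAt hS z.2 hMp.isCompact hb hMg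
  refine ⟨(Subtype.val ⁻¹' M)ᶜ, hUo, hzU, by linarith, ?_⟩
  rw [compl_compl]
  obtain ⟨L, hLp, hMeq⟩ := hMp
  rw [hMeq]
  exact fmc_of_pieces (fun i => (hLp i).2) (fun i q hq => hMg.1 (hMeq ▸ Set.mem_iUnion.2 ⟨i, hq⟩))

lemma col_dir1 {S : Set Y} (hS : IsCompact S) (hne : S.Nonempty) (h : ColocallyConnected ↥S)
    {c : ℝ} (hc : 0 < c) : ∃ m : ℕ, FP (PiecesK 1) c (1 / (m + 1)) S := by
  have := unif (fun _ : ℕ => PiecesK 1) (fun _ hp => hp) hS hne (c := c) ?_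
  · obtain ⟨m, k, hm⟩ := this; exact ⟨m, hm⟩
  intro z hz
  obtain ⟨U, hUo, hzU, hUd, hUc⟩ := h c hc ⟨z, hz⟩
  obtain ⟨ρ, hρ, hg⟩ := goodAt_of_openU hS hz hUo hzU hUd
  haveI : CompactSpace ↥S := isCompact_iff_compactSpace.mp hS
  refine ⟨0, Subtype.val '' Uᶜ, ρ, hρ, ⟨fun _ => Subtype.val '' Uᶜ, fun _ =>
    ⟨(hUo.isClosed_compl.isCompact).image continuous_subtype_val,
      hUc.image _ continuous_subtype_val.continuousOn⟩, (Set.iUnion_const _).symm⟩, hg⟩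

lemma col_dir2 {S : Set Y} (hS : IsCompact S)
    (h : ∀ c : ℝ, 0 < c → ∃ b : ℝ, 0 < b ∧ FP (PiecesK 1) c b S) :
    ColocallyConnected ↥S := by
  intro ε hε z
  obtain ⟨b, hb, hF⟩ := h ε hε
  obtain ⟨M, hMp, hMg⟩ := hF z.1 z.2
  obtain ⟨hUo, hzU, hUd⟩ := openU_of_goodAt hS z.2 hMp.isCompact hb hMg
  refine ⟨(Subtype.val ⁻¹' M)ᶜ, hUo, hzU, by linarith, ?_⟩
  rw [compl_compl]
  obtain ⟨L, hLp, hMeq⟩ := hMp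
  have hM0 : M = L 0 := by
    rw [hMeq]
    apply Set.eq_of_subset_of_subset
    · exact Set.iUnion_subset fun i => by rw [Fin.fin_one_eq_zero i]
    · exact Set.subset_iUnion L 0
  have hLS : L 0 ⊆ S := hM0 ▸ hMg.1
  rw [hM0, ← Topology.IsInducing.subtypeVal.isPreconnected_image, Subtype.image_preimage_coe,
    Set.inter_eq_right.2 hLS]
  exact (hLp 0).2

lemma ntv_closed (r : ℝ) :
    IsClosed {K : Subcontinua Y | ∃ x ∈ (K.1 : Set Y), ∃ y ∈ (K.1 : Set Y), r ≤ dist x y} := by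
  rw [← isSeqClosed_iff_isClosed]
  intro Kj K hmem hlim
  have hD : Tendsto (fun j => hausdorffDist (((Kj j).1 : Set Y)) ((K.1 : Set Y))) atTop (𝓝 0) := by
    have := tendsto_iff_dist_tendsto_zero.1 hlim
    simpa [Subtype.dist_eq, NonemptyCompacts.dist_eq] using this
  choose x hx y hy hxy using hmem
  obtain ⟨⟨a, b⟩, φ, hφmono, hφt⟩ := CompactSpace.tendsto_subseq (fun j => ((x j : Y), (y j : Y)))
  have hat : Tendsto (fun n => x (φ n)) atTop (𝓝 a) :=
    (continuous_fst.tendsto _).comp hφt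
  have hbt : Tendsto (fun n => y (φ n)) atTop (𝓝 b) :=
    (continuous_snd.tendsto _).comp hφt
  have hDφ : Tendsto (fun n => hausdorffDist (((Kj (φ n)).1 : Set Y)) ((K.1 : Set Y)))
      atTop (𝓝 0) := hD.comp hφmono.tendsto_atTop
  have hmemlim : ∀ (q : Y) (qn : ℕ → Y), Tendsto qn atTop (𝓝 q) →
      (∀ n, qn n ∈ ((Kj (φ n)).1 : Set Y)) → q ∈ (K.1 : Set Y) := by
    intro q qn hqt hqm
    have hble : ∀ n, infDist q ((K.1 : Set Y)) ≤
        dist q (qn n) + hausdorffDist (((Kj (φ n)).1 : Set Y)) ((K.1 : Set Y)) := by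
      intro n
      have h1 : infDist q ((K.1 : Set Y)) ≤ infDist (qn n) ((K.1 : Set Y)) + dist q (qn n) :=
        infDist_le_infDist_add_dist
      have h2 : infDist (qn n) ((K.1 : Set Y)) ≤
          hausdorffDist (((Kj (φ n)).1 : Set Y)) ((K.1 : Set Y)) :=
        infDist_le_hausdorffDist_of_mem (hqm n)
          (hedist_ne_top _ _ (Kj (φ n)).1.nonempty K.1.nonempty)
      linarith
    have htt : Tendsto (fun n => dist q (qn n) +
        hausdorffDist (((Kj (φ n)).1 : Set Y)) ((K.1 : Set Y))) atTop (𝓝 0) := by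
      have h1 : Tendsto (fun n => dist q (qn n)) atTop (𝓝 0) := by
        have := tendsto_iff_dist_tendsto_zero.1 hqt
        simpa [dist_comm] using this
      simpa using h1.add hDφ
    have : infDist q ((K.1 : Set Y)) ≤ 0 := ge_of_tendsto htt (Eventually.of_forall hble)
    exact (K.1.isCompact.isClosed.mem_iff_infDist_zero K.1.nonempty).2
      (le_antisymm this infDist_nonneg)
  refine ⟨a, hmemlim a _ hat (fun n => hx (φ n)), b, hmemlim b _ hbt (fun n => hy (φ n)), ?_⟩
  have hdt : Tendsto (fun n => dist (x (φ n)) (y (φ n))) atTop (𝓝 (dist a b)) :=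
    hat.dist hbt
  exact ge_of_tendsto hdt (Eventually.of_forall fun n => hxy (φ n))

lemma ntv_iff {S : Set Y} : S.Nontrivial ↔
    ∃ p : ℕ, ∃ x ∈ S, ∃ y ∈ S, 1 / ((p : ℝ) + 1) ≤ dist x y := by
  constructor
  · rintro ⟨x, hx, y, hy, hne⟩
    obtain ⟨p, hp⟩ := exists_nat_one_div_lt (dist_pos.2 hne)
    exact ⟨p, x, hx, y, hy, hp.le⟩
  · rintro ⟨p, x, hx, y, hy, hle⟩
    have : (0 : ℝ) < 1 / ((p : ℝ) + 1) := by positivity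
    exact ⟨x, hx, y, hy, dist_pos.1 (lt_of_lt_of_le this hle)⟩

lemma FP.mono_c {R : Set Y → Prop} {c c' b : ℝ} {S : Set Y} (hcc : c ≤ c')
    (h : FP R c b S) : FP R c' b S := by
  intro z hz
  obtain ⟨M, hR, h1, h2, h3⟩ := h z hz
  exact ⟨M, hR, h1, h2, fun y hy hyM y' hy' hyM' => le_trans (h3 y hy hyM y' hy' hyM')
    (by linarith)⟩


end AuxSLC

/-- For every compact metric space `Y`, the families `Apo(Y)` and `Col(Y)`
of nondegenerate aposyndetic (resp. colocally connected) subcontinua of `Y` are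
`F_{σδ}`-subsets of the hyperspace `C(Y)`. -/
theorem statement0 (Y : Type) [MetricSpace Y] [CompactSpace Y] :
    IsFsigmaDelta (Apo Y) ∧ IsFsigmaDelta (Col Y) := by
  constructor
  · refine ⟨fun n => ⋃ t : ℕ,
      ({K : Subcontinua Y | ∃ x ∈ (K.1 : Set Y), ∃ y ∈ (K.1 : Set Y),
          1 / ((t.unpair.1 : ℝ) + 1) ≤ dist x y} ∩
        {K : Subcontinua Y | FP (PiecesK t.unpair.2.unpair.2) (1 / ((n : ℝ) + 1))
          (1 / ((t.unpair.2.unpair.1 : ℝ) + 1)) ((K.1 : Set Y))}),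
      fun n => ⟨_, fun t => (ntv_closed _).inter (closedFP _ _ _), rfl⟩, ?_⟩
    ext K
    simp only [Apo, Set.mem_setOf_eq, Set.mem_iInter, Set.mem_iUnion, Set.mem_inter_iff]
    constructor
    · rintro ⟨hnt, hapo⟩ n
      obtain ⟨p, hp⟩ := ntv_iff.1 hnt
      obtain ⟨m, k, hF⟩ := apo_dir1 K.1.isCompact K.1.nonempty hapo
        (c := 1 / ((n : ℝ) + 1)) (by positivity)
      refine ⟨Nat.pair p (Nat.pair m k), ?_, ?_⟩
      · rw [Nat.unpair_pair]; exact hp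
      · rw [Nat.unpair_pair]; simp only; rw [Nat.unpair_pair]; exact hF
    · intro h
      have hnt : (K.1 : Set Y).Nontrivial := by
        obtain ⟨t, ht, -⟩ := h 0
        exact ntv_iff.2 ⟨t.unpair.1, ht⟩
      refine ⟨hnt, apo_dir2 K.1.isCompact fun c hc => ?_⟩
      obtain ⟨n, hn⟩ := exists_nat_one_div_lt hc
      obtain ⟨t, -, hF⟩ := h n
      exact ⟨1 / ((t.unpair.2.unpair.1 : ℝ) + 1), t.unpair.2.unpair.2, by positivity,
        hF.mono_c hn.le⟩
  · refine ⟨fun n => ⋃ t : ℕ,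
      ({K : Subcontinua Y | ∃ x ∈ (K.1 : Set Y), ∃ y ∈ (K.1 : Set Y),
          1 / ((t.unpair.1 : ℝ) + 1) ≤ dist x y} ∩
        {K : Subcontinua Y | FP (PiecesK 1) (1 / ((n : ℝ) + 1))
          (1 / ((t.unpair.2 : ℝ) + 1)) ((K.1 : Set Y))}),
      fun n => ⟨_, fun t => (ntv_closed _).inter (closedFP _ _ _), rfl⟩, ?_⟩
    ext K
    simp only [Col, Set.mem_setOf_eq, Set.mem_iInter, Set.mem_iUnion, Set.mem_inter_iff]
    constructor
    · rintro ⟨hnt, hcol⟩ n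
      obtain ⟨p, hp⟩ := ntv_iff.1 hnt
      obtain ⟨m, hF⟩ := col_dir1 K.1.isCompact K.1.nonempty hcol
        (c := 1 / ((n : ℝ) + 1)) (by positivity)
      refine ⟨Nat.pair p m, ?_, ?_⟩
      · rw [Nat.unpair_pair]; exact hp
      · rw [Nat.unpair_pair]; exact hF
    · intro h
      have hnt : (K.1 : Set Y).Nontrivial := by
        obtain ⟨t, ht, -⟩ := h 0
        exact ntv_iff.2 ⟨t.unpair.1, ht⟩
      refine ⟨hnt, col_dir2 K.1.isCompact fun c hc => ?_⟩
      obtain ⟨n, hn⟩ := exists_nat_one_div_lt hc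
      obtain ⟨t, -, hF⟩ := h n
      exact ⟨1 / ((t.unpair.2 : ℝ) + 1), by positivity, hF.mono_c hn.le⟩
end

section
/- If X is a locally connected continuum, then the family S(X) of all closed separators of X is an F_σ-subset of the hyperspace 2^X. -/
open Topology TopologicalSpace Metric Set Filter

section Aux

variable {X : Type} [MetricSpace X] [CompactSpace X] [LocallyConnectedSpace X]

/-- Small compact connected neighborhoods. -/
lemma exists_nice_nbhd {O : Set X} (hO : IsOpen O) {x : X} (hx : x ∈ O) {r : ℝ} (hr : 0 < r) :
    ∃ W : Set X, IsOpen W ∧ x ∈ W ∧ IsCompact (closure W) ∧ IsPreconnected (closure W) ∧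
      closure W ⊆ O ∧ closure W ⊆ Metric.closedBall x r := by
  obtain ⟨ε, hε, hball⟩ := Metric.isOpen_iff.mp hO x hx
  set ρ := min r ε / 2 with hρdef
  have hρ : 0 < ρ := by positivity
  obtain ⟨W, hWsub, hWopen, hxW, hWconn⟩ :=
    locallyConnectedSpace_iff_subsets_isOpen_isConnected.mp ‹_› x (Metric.ball x ρ)
      (Metric.ball_mem_nhds x hρ)
  have hclsub : closure W ⊆ Metric.closedBall x ρ :=
    (closure_mono hWsub).trans Metric.closure_ball_subset_closedBall
  refine ⟨W, hWopen, hxW, isClosed_closure.isCompact, hWconn.isPreconnected.closure, ?_, ?_⟩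
  · refine hclsub.trans <| (Metric.closedBall_subset_ball ?_).trans hball
    have : ρ ≤ ε / 2 := by
      rw [hρdef]; gcongr; exact min_le_right _ _
    linarith
  · refine hclsub.trans (Metric.closedBall_subset_closedBall ?_)
    have : ρ ≤ r / 2 := by rw [hρdef]; gcongr; exact min_le_left _ _
    linarith

/-- Two points of an open set are "linked" if a compact connected subset contains both. -/
def Link (O : Set X) (x y : X) : Prop :=
  ∃ S : Set X, IsCompact S ∧ IsPreconnected S ∧ S ⊆ O ∧ x ∈ S ∧ y ∈ S

lemma link_of_mem_connectedComponentIn {O : Set X} (hO : IsOpen O) {x y : X}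
    (hy : y ∈ connectedComponentIn O x) : Link O x y := by
  have hxO : x ∈ O := connectedComponentIn_nonempty_iff.mp ⟨y, hy⟩
  have hyO : y ∈ O := connectedComponentIn_subset O x hy
  have hW : ∀ t ∈ O, ∃ W : Set X, IsOpen W ∧ t ∈ W ∧ IsCompact (closure W) ∧
      IsPreconnected (closure W) ∧ closure W ⊆ O := by
    intro t ht
    obtain ⟨W, h1, h2, h3, h4, h5, -⟩ := exists_nice_nbhd hO ht one_pos
    exact ⟨W, h1, h2, h3, h4, h5⟩
  choose! W hWo hWmem hWcpt hWconn hWsub using hW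
  set A : Set X := {t | Link O x t} with hA
  have hxA : x ∈ A := ⟨{x}, isCompact_singleton, isPreconnected_singleton,
    singleton_subset_iff.mpr hxO, rfl, rfl⟩
  by_contra hyA
  set U : Set X := ⋃ t ∈ O ∩ A, W t with hU
  set V : Set X := ⋃ t ∈ O \ A, W t with hV
  have hUsubA : U ⊆ A := by
    rintro w hw
    simp only [hU, mem_iUnion] at hw
    obtain ⟨t, ⟨htO, htA⟩, hwW⟩ := hw
    obtain ⟨S, hScpt, hSconn, hSsub, hxS, htS⟩ := htA
    exact ⟨S ∪ closure (W t), hScpt.union (hWcpt t htO),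
      hSconn.union t htS (subset_closure (hWmem t htO)) (hWconn t htO),
      union_subset hSsub (hWsub t htO), Or.inl hxS, Or.inr (subset_closure hwW)⟩
  have hVA : ∀ w ∈ V, w ∉ A := by
    rintro w hw hwA
    simp only [hV, mem_iUnion] at hw
    obtain ⟨t, ⟨htO, htA⟩, hwW⟩ := hw
    obtain ⟨S, hScpt, hSconn, hSsub, hxS, hwS⟩ := hwA
    exact htA ⟨S ∪ closure (W t), hScpt.union (hWcpt t htO),
      hSconn.union w hwS (subset_closure hwW) (hWconn t htO),
      union_subset hSsub (hWsub t htO), Or.inl hxS,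
      Or.inr (subset_closure (hWmem t htO))⟩
  have hcover : connectedComponentIn O x ⊆ U ∪ V := by
    intro t ht
    have htO : t ∈ O := connectedComponentIn_subset O x ht
    by_cases htA : t ∈ A
    · exact Or.inl (mem_biUnion ⟨htO, htA⟩ (hWmem t htO))
    · exact Or.inr (mem_biUnion ⟨htO, htA⟩ (hWmem t htO))
  obtain ⟨z, hzT, hzU, hzV⟩ := isPreconnected_connectedComponentIn
    U V (isOpen_biUnion fun t ht => hWo t ht.1) (isOpen_biUnion fun t ht => hWo t ht.1)
    hcover ⟨x, mem_connectedComponentIn hxO, mem_biUnion ⟨hxO, hxA⟩ (hWmem x hxO)⟩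
    ⟨y, hy, mem_biUnion ⟨hyO, hyA⟩ (hWmem y hyO)⟩
  exact hVA z hzV (hUsubA hzU)

end Aux
section Aux2
variable {X : Type} [MetricSpace X] [CompactSpace X]

/-- the n-th piece of the separator family. -/
def sepF (X : Type) [MetricSpace X] (n : ℕ) : Set (TopologicalSpace.NonemptyCompacts X) :=
  {K | ∃ x y : X, ((n : ℝ) + 1)⁻¹ ≤ infDist x (K : Set X) ∧
    ((n : ℝ) + 1)⁻¹ ≤ infDist y (K : Set X) ∧
    ∀ S : Set X, IsCompact S → IsPreconnected S → S ⊆ (K : Set X)ᶜ → x ∈ S → y ∈ S → False}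

lemma isClosed_sepF [LocallyConnectedSpace X] (n : ℕ) : IsClosed (sepF X n) := by
  apply IsSeqClosed.isClosed
  intro Ks K hmem hlim
  choose xs ys h1 h2 h3 using hmem
  obtain ⟨x, φ, hφ, hx⟩ := CompactSpace.tendsto_subseq xs
  obtain ⟨y, ψ, hψ, hy⟩ := CompactSpace.tendsto_subseq (ys ∘ φ)
  set σ : ℕ → ℕ := φ ∘ ψ with hσ
  have hK' : Tendsto (fun i => Ks (σ i)) atTop (𝓝 K) :=
    hlim.comp ((hφ.comp hψ).tendsto_atTop)
  have hx' : Tendsto (fun i => xs (σ i)) atTop (𝓝 x) := hx.comp hψ.tendsto_atTop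
  have hy' : Tendsto (fun i => ys (σ i)) atTop (𝓝 y) := hy
  have hinf : ∀ z : X, ∀ zs : ℕ → X, Tendsto zs atTop (𝓝 z) →
      (∀ i, ((n : ℝ) + 1)⁻¹ ≤ infDist (zs i) (Ks (σ i) : Set X)) →
      ((n : ℝ) + 1)⁻¹ ≤ infDist z (K : Set X) := by
    intro z zs hzs hle
    have hpair : Tendsto (fun i => ((zs i : X), Ks (σ i))) atTop (𝓝 (z, K)) :=
      hzs.prodMk_nhds hK'
    have := (lipschitz_infDist.continuous.tendsto (z, K)).comp hpair
    exact ge_of_tendsto this (Eventually.of_forall hle)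
  refine ⟨x, y, hinf x _ hx' (fun i => h1 (σ i)), hinf y _ hy' (fun i => h2 (σ i)), ?_⟩
  intro S hScpt hSconn hSsub hxS hyS
  have hSne : S.Nonempty := ⟨x, hxS⟩
  obtain ⟨s₀, hs₀S, hs₀min⟩ := hScpt.exists_isMinOn hSne
    (continuous_infDist_pt (K : Set X)).continuousOn
  set δ := infDist s₀ (K : Set X) with hδdef
  have hKcl : IsClosed (K : Set X) := K.isCompact.isClosed
  have hδ : 0 < δ := (hKcl.notMem_iff_infDist_pos K.nonempty).mp (hSsub hs₀S)
  have hδS : ∀ p ∈ S, δ ≤ infDist p (K : Set X) := fun p hp => hs₀min hp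
  have hOc : IsOpen (K : Set X)ᶜ := hKcl.isOpen_compl
  obtain ⟨Wx, hWxo, hxWx, hWxcpt, hWxconn, -, hWxball⟩ :=
    exists_nice_nbhd hOc (hSsub hxS) (half_pos hδ)
  obtain ⟨Wy, hWyo, hyWy, hWycpt, hWyconn, -, hWyball⟩ :=
    exists_nice_nbhd hOc (hSsub hyS) (half_pos hδ)
  have hballbound : ∀ (z : X), z ∈ S → ∀ (Wc : Set X), Wc ⊆ Metric.closedBall z (δ/2) →
      ∀ p ∈ Wc, δ/2 ≤ infDist p (K : Set X) := by
    intro z hz Wc hWc p hp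
    have h1 : infDist z (K : Set X) ≤ infDist p (K : Set X) + dist z p :=
      infDist_le_infDist_add_dist
    have h2 : dist p z ≤ δ/2 := hWc hp
    have h3 : δ ≤ infDist z (K : Set X) := hδS z hz
    rw [dist_comm] at h2
    linarith
  set S' := (S ∪ closure Wx) ∪ closure Wy with hS'
  have hS'cpt : IsCompact S' := (hScpt.union hWxcpt).union hWycpt
  have hS'conn : IsPreconnected S' :=
    (hSconn.union x hxS (subset_closure hxWx) hWxconn).union y (Or.inl hyS)
      (subset_closure hyWy) hWyconn
  have hS'bound : ∀ p ∈ S', δ/2 ≤ infDist p (K : Set X) := by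
    rintro p ((hp | hp) | hp)
    · linarith [hδS p hp]
    · exact hballbound x hxS _ hWxball p hp
    · exact hballbound y hyS _ hWyball p hp
  have e1 : ∀ᶠ i in atTop, xs (σ i) ∈ Wx := hx' (hWxo.mem_nhds hxWx)
  have e2 : ∀ᶠ i in atTop, ys (σ i) ∈ Wy := hy' (hWyo.mem_nhds hyWy)
  have e3 : ∀ᶠ i in atTop, dist (Ks (σ i)) K < δ/4 :=
    hK' (Metric.ball_mem_nhds K (by positivity))
  obtain ⟨i, hi1, hi2, hi3⟩ := (e1.and (e2.and e3)).exists
  refine h3 (σ i) S' hS'cpt hS'conn ?_ (Or.inl (Or.inr (subset_closure hi1)))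
    (Or.inr (subset_closure hi2))
  intro p hp hpK
  have hfin : EMetric.hausdorffEdist (Ks (σ i) : Set X) (K : Set X) ≠ ⊤ :=
    hausdorffEdist_ne_top_of_nonempty_of_bounded (Ks (σ i)).nonempty K.nonempty
      (Ks (σ i)).isCompact.isBounded K.isCompact.isBounded
  have h4 : infDist p (K : Set X) ≤ hausdorffDist (Ks (σ i) : Set X) (K : Set X) :=
    infDist_le_hausdorffDist_of_mem hpK hfin
  have h5 : hausdorffDist (Ks (σ i) : Set X) (K : Set X) = dist (Ks (σ i)) K :=
    (Metric.NonemptyCompacts.dist_eq).symm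
  have h6 := hS'bound p hp
  rw [h5] at h4
  linarith [hi3]


/-- If `X` is a locally connected continuum, then the family `S(X)` of all
closed separators of `X` is an `F_σ`-subset of the hyperspace `2^X`. -/
theorem statement5 (X : Type) [MetricSpace X] [CompactSpace X] [ConnectedSpace X]
    [Nonempty X] [LocallyConnectedSpace X] :
    IsFsigma (SepFam X) := by
  refine ⟨fun n => sepF X n, fun n => isClosed_sepF n, ?_⟩
  ext K
  simp only [SepFam, IsClosedSeparator, mem_setOf_eq, mem_iUnion]
  constructor
  · rintro ⟨hKcl, U, V, hUo, hVo, ⟨u, hu⟩, ⟨v, hv⟩, hdisj, hcompl⟩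
    have huK : u ∈ (K : Set X)ᶜ := hcompl ▸ Or.inl hu
    have hvK : v ∈ (K : Set X)ᶜ := hcompl ▸ Or.inr hv
    have hupos : 0 < infDist u (K : Set X) :=
      (hKcl.notMem_iff_infDist_pos K.nonempty).mp huK
    have hvpos : 0 < infDist v (K : Set X) :=
      (hKcl.notMem_iff_infDist_pos K.nonempty).mp hvK
    obtain ⟨n, hn⟩ := exists_nat_one_div_lt (lt_min hupos hvpos)
    rw [one_div] at hn
    refine ⟨n, u, v, (hn.trans_le (min_le_left _ _)).le,
      (hn.trans_le (min_le_right _ _)).le, ?_⟩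
    intro S hScpt hSconn hSsub hus hvs
    obtain ⟨z, -, hzU, hzV⟩ := hSconn U V hUo hVo (by rw [← hcompl]; exact hSsub)
      ⟨u, hus, hu⟩ ⟨v, hvs, hv⟩
    exact hdisj.le_bot ⟨hzU, hzV⟩
  · rintro ⟨n, x, y, hxd, hyd, hsep⟩
    have hpos : (0 : ℝ) < ((n : ℝ) + 1)⁻¹ := by positivity
    have hKcl : IsClosed (K : Set X) := K.isCompact.isClosed
    have hmemd : ∀ z : X, ((n : ℝ) + 1)⁻¹ ≤ infDist z (K : Set X) → z ∈ (K : Set X)ᶜ := by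
      intro z hz hzK
      rw [infDist_zero_of_mem hzK] at hz
      exact absurd hz (not_le.mpr hpos)
    have hxO : x ∈ (K : Set X)ᶜ := hmemd x hxd
    have hyO : y ∈ (K : Set X)ᶜ := hmemd y hyd
    set O := (K : Set X)ᶜ with hOdef
    have hOo : IsOpen O := hKcl.isOpen_compl
    set U := connectedComponentIn O x with hUdef
    have hUo : IsOpen U := hOo.connectedComponentIn
    have hyU : y ∉ U := by
      intro hyU
      obtain ⟨S, hScpt, hSconn, hSsub, hxS, hyS⟩ :=
        link_of_mem_connectedComponentIn hOo hyU
      exact hsep S hScpt hSconn hSsub hxS hyS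
    set V := ⋃ z ∈ O \ U, connectedComponentIn O z with hVdef
    have hVo : IsOpen V := isOpen_biUnion fun z _ => hOo.connectedComponentIn
    refine ⟨hKcl, U, V, hUo, hVo, ⟨x, mem_connectedComponentIn hxO⟩,
      ⟨y, mem_biUnion ⟨hyO, hyU⟩ (mem_connectedComponentIn hyO)⟩, ?_, ?_⟩
    · rw [Set.disjoint_left]
      intro w hwU hwV
      simp only [hVdef, mem_iUnion] at hwV
      obtain ⟨z, ⟨hzO, hzU⟩, hwz⟩ := hwV
      have e1 : connectedComponentIn O z = connectedComponentIn O w :=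
        connectedComponentIn_eq hwz
      have e2 : connectedComponentIn O x = connectedComponentIn O w :=
        connectedComponentIn_eq hwU
      exact hzU (by rw [hUdef, e2, ← e1]; exact mem_connectedComponentIn hzO)
    · apply Subset.antisymm
      · intro z hzO
        by_cases hzU : z ∈ U
        · exact Or.inl hzU
        · exact Or.inr (mem_biUnion ⟨hzO, hzU⟩ (mem_connectedComponentIn hzO))
      · exact union_subset (connectedComponentIn_subset O x)
          (iUnion₂_subset fun z _ => connectedComponentIn_subset O z)
end Aux2
end

section
/- If X is a locally connected continuum, then the family S(X) ∩ N(X) of nowhere dense closed separators of X belongs to the class D_2(F_σ) as a subset of 2^X, and the family S(X) ∩ N(X) ∩ C(X) of nowhere dense subcontinua that separate X belongs to D_2(F_σ) as a subset of C(X). -/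
open Topology TopologicalSpace Metric Set Filter

section Statement9Aux

set_option linter.unusedSectionVars false
set_option maxHeartbeats 1000000

section FsigmaHelpers
variable {Z : Type} [TopologicalSpace Z]

lemma isFsigma_biUnion_countable {ι : Type} {s : Set ι} (hs : s.Countable)
    (F : ι → Set Z) (h : ∀ i ∈ s, IsClosed (F i)) : IsFsigma (⋃ i ∈ s, F i) := by
  rcases s.eq_empty_or_nonempty with rfl | hne
  · exact ⟨fun _ => ∅, fun _ => isClosed_empty, by simp⟩
  · obtain ⟨f, rfl⟩ := hs.exists_eq_range hne
    exact ⟨fun n => F (f n), fun n => h _ ⟨n, rfl⟩, by rw [Set.biUnion_range]⟩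

lemma isFsigma_preimage {W : Type} [TopologicalSpace W] {f : W → Z} (hf : Continuous f)
    {A : Set Z} (hA : IsFsigma A) : IsFsigma (f ⁻¹' A) := by
  obtain ⟨F, hF, rfl⟩ := hA
  exact ⟨fun n => f ⁻¹' F n, fun n => (hF n).preimage hf, by simp [preimage_iUnion]⟩

end FsigmaHelpers

section Key
variable {X : Type} [MetricSpace X] [LocallyConnectedSpace X]

/-- If `p, q` lie in a common preconnected set disjoint from the closed nonempty set `K`,
then they lie in a common preconnected set at positive distance from `K`. -/
lemma key_component (K : Set X) (hK : IsClosed K) (hKne : K.Nonempty) {p q : X} {L : Set X}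
    (hL : IsPreconnected L) (hp : p ∈ L) (hq : q ∈ L) (hdisj : Disjoint L K) :
    ∃ δ : ℝ, 0 < δ ∧ ∃ M : Set X, IsPreconnected M ∧ p ∈ M ∧ q ∈ M ∧
      ∀ x ∈ M, δ < infDist x K := by
  set V : ℝ → Set X := fun δ => {x | δ < infDist x K} with hV
  have hVopen : ∀ δ, IsOpen (V δ) :=
    fun δ => isOpen_lt continuous_const (continuous_infDist_pt K)
  have hVmono : ∀ {δ δ' : ℝ}, δ' ≤ δ → V δ ⊆ V δ' := fun h x hx => lt_of_le_of_lt h hx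
  have hVsub : ∀ {δ : ℝ}, 0 < δ → V δ ⊆ Kᶜ := by
    intro δ hδ x hx
    intro hxK
    have : infDist x K = 0 := infDist_zero_of_mem hxK
    simp only [V, mem_setOf_eq, this] at hx
    exact absurd (hδ.trans hx) (lt_irrefl 0)
  set W : Set X := ⋃ δ : {d : ℝ // 0 < d}, connectedComponentIn (V δ.1) p with hW
  have hWopen : IsOpen W := isOpen_iUnion fun δ => (hVopen δ.1).connectedComponentIn
  have hLK : L ⊆ Kᶜ := fun x hx => (disjoint_left.mp hdisj) hx
  have hpK : p ∉ K := fun h => hLK hp h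
  set L' : Set X := connectedComponentIn Kᶜ p with hL'
  have hqL' : q ∈ L' := hL.subset_connectedComponentIn hp hLK hq
  have hpL' : p ∈ L' := mem_connectedComponentIn hpK
  have hrp : 0 < infDist p K := (hK.notMem_iff_infDist_pos hKne).mp hpK
  have hpW : p ∈ W := by
    have hpV : p ∈ V (infDist p K / 2) := by
      simp only [V, mem_setOf_eq]; linarith
    exact mem_iUnion.mpr ⟨⟨_, by linarith⟩, mem_connectedComponentIn hpV⟩
  set T : Set X := L' \ W with hT
  have hTopen : IsOpen T := by
    rw [isOpen_iff_forall_mem_open]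
    rintro x ⟨hxL', hxW⟩
    have hxK : x ∉ K := connectedComponentIn_subset Kᶜ p hxL'
    have hr : 0 < infDist x K := (hK.notMem_iff_infDist_pos hKne).mp hxK
    have hxV : x ∈ V (infDist x K / 2) := by simp only [V, mem_setOf_eq]; linarith
    set N : Set X := connectedComponentIn (V (infDist x K / 2)) x with hN
    have hNopen : IsOpen N := (hVopen _).connectedComponentIn
    have hxN : x ∈ N := mem_connectedComponentIn hxV
    have hNV : N ⊆ V (infDist x K / 2) := connectedComponentIn_subset _ _
    have hNK : N ⊆ Kᶜ := fun y hy => hVsub (by linarith) (hNV hy)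
    have hNL' : N ⊆ L' := by
      have h1 : N ⊆ connectedComponentIn Kᶜ x :=
        isPreconnected_connectedComponentIn.subset_connectedComponentIn hxN hNK
      rwa [← connectedComponentIn_eq hxL'] at h1
    have hNW : Disjoint N W := by
      rw [disjoint_left]
      rintro y hyN hyW
      simp only [W, mem_iUnion] at hyW
      obtain ⟨⟨δ, hδ⟩, hyC⟩ := hyW
      set δ' : ℝ := min δ (infDist x K / 2) with hδ'
      have hδ'pos : 0 < δ' := lt_min hδ (by linarith)
      have hCmono : connectedComponentIn (V δ) p ⊆ connectedComponentIn (V δ') p :=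
        connectedComponentIn_mono p (hVmono (min_le_left _ _))
      have hNV' : N ⊆ V δ' := fun z hz => hVmono (min_le_right _ _) (hNV hz)
      have hpVδ : p ∈ V δ := by
        rcases connectedComponentIn_nonempty_iff.mp ⟨y, hyC⟩ with h; exact h
      have hpVδ' : p ∈ V δ' := hVmono (min_le_left _ _) hpVδ
      have hunion : IsPreconnected (connectedComponentIn (V δ) p ∪ N) :=
        IsPreconnected.union y hyC hyN isPreconnected_connectedComponentIn
          isPreconnected_connectedComponentIn
      have hsub : connectedComponentIn (V δ) p ∪ N ⊆ connectedComponentIn (V δ') p :=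
        hunion.subset_connectedComponentIn (Or.inl (mem_connectedComponentIn hpVδ))
          (union_subset (connectedComponentIn_subset _ _ |>.trans
            (hVmono (min_le_left _ _))) hNV')
      have : x ∈ W := mem_iUnion.mpr ⟨⟨δ', hδ'pos⟩, hsub (Or.inr hxN)⟩
      exact hxW this
    exact ⟨N, fun y hy => ⟨hNL' hy, disjoint_left.mp hNW hy⟩, hNopen, hxN⟩
  have hqW : q ∈ W := by
    by_contra hqW
    have hpre : IsPreconnected L' := isPreconnected_connectedComponentIn
    have hcover : L' ⊆ W ∪ T := fun x hx => by
      by_cases h : x ∈ W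
      · exact Or.inl h
      · exact Or.inr ⟨hx, h⟩
    have h1 : (L' ∩ (W ∩ T)).Nonempty :=
      hpre W T hWopen hTopen hcover ⟨p, hpL', hpW⟩ ⟨q, hqL', hqL', hqW⟩
    obtain ⟨z, _, hzW, _, hzW'⟩ := h1
    exact hzW' hzW
  simp only [W, mem_iUnion] at hqW
  obtain ⟨⟨δ, hδ⟩, hqC⟩ := hqW
  have hpVδ : p ∈ V δ := connectedComponentIn_nonempty_iff.mp ⟨q, hqC⟩
  exact ⟨δ, hδ, connectedComponentIn (V δ) p, isPreconnected_connectedComponentIn,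
    mem_connectedComponentIn hpVδ, hqC, fun x hx => connectedComponentIn_subset (V δ) p hx⟩

end Key

section HyperLemmas
variable {X : Type} [MetricSpace X] [CompactSpace X] [Nonempty X]

lemma fin_edist (K K' : Hyper X) :
    EMetric.hausdorffEdist (K : Set X) (K' : Set X) ≠ ⊤ :=
  hausdorffEdist_ne_top_of_nonempty_of_bounded K.nonempty K'.nonempty
    K.isCompact.isBounded K'.isCompact.isBounded

lemma isClosed_supset (s : Set X) : IsClosed {K : Hyper X | s ⊆ (K : Set X)} := by
  rw [← isOpen_compl_iff, Metric.isOpen_iff]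
  intro K hK
  obtain ⟨x, hxs, hxK⟩ := not_subset.mp hK
  have hr : 0 < infDist x (K : Set X) :=
    (K.isCompact.isClosed.notMem_iff_infDist_pos K.nonempty).mp hxK
  refine ⟨_, hr, fun K' hK' => ?_⟩
  rw [mem_ball] at hK'
  intro hsub
  have h1 : infDist x (K : Set X) ≤ hausdorffDist (K' : Set X) (K : Set X) :=
    infDist_le_hausdorffDist_of_mem (hsub hxs) (fin_edist K' K)
  rw [← NonemptyCompacts.dist_eq] at h1
  exact absurd (h1.trans_lt hK') (lt_irrefl _)

/-- The separation predicate: `K` separates `p` from `q`. -/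
def SepPts (p q : X) (K : Set X) : Prop :=
  ∀ L : Set X, IsPreconnected L → p ∈ L → q ∈ L → ¬ Disjoint L K

lemma isClosed_sepPts [LocallyConnectedSpace X] (p q : X) :
    IsClosed {K : Hyper X | SepPts p q (K : Set X)} := by
  rw [← isOpen_compl_iff, Metric.isOpen_iff]
  intro K hK
  simp only [mem_compl_iff, mem_setOf_eq, SepPts, not_forall] at hK
  obtain ⟨L, hLpre, hpL, hqL, hdisj⟩ := hK
  rw [not_not] at hdisj
  obtain ⟨δ, hδ, M, hMpre, hpM, hqM, hMd⟩ :=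
    key_component (K : Set X) K.isCompact.isClosed K.nonempty hLpre hpL hqL hdisj
  refine ⟨δ, hδ, fun K' hK' => ?_⟩
  rw [mem_ball] at hK'
  simp only [mem_compl_iff, mem_setOf_eq, SepPts, not_forall]
  refine ⟨M, hMpre, hpM, hqM, ?_⟩
  rw [not_not, disjoint_left]
  intro x hxM hxK'
  have h1 : infDist x (K : Set X) ≤ hausdorffDist (K' : Set X) (K : Set X) :=
    infDist_le_hausdorffDist_of_mem hxK' (fin_edist K' K)
  rw [← NonemptyCompacts.dist_eq] at h1
  exact absurd ((hMd x hxM).trans_le h1) (not_lt.mpr hK'.le)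

/-- Closed building blocks for `SepFam`. -/
def Asep (p q : X) (n : ℕ) : Set (Hyper X) :=
  {K | 1/(n+1:ℝ) ≤ infDist p (K : Set X) ∧ 1/(n+1:ℝ) ≤ infDist q (K : Set X) ∧
    SepPts p q (K : Set X)}

lemma isClosed_Asep [LocallyConnectedSpace X] (p q : X) (n : ℕ) :
    IsClosed (Asep p q n) := by
  have h1 : IsClosed {K : Hyper X | 1/(n+1:ℝ) ≤ infDist p (K : Set X)} :=
    isClosed_le continuous_const (lipschitz_infDist_set p).continuous
  have h2 : IsClosed {K : Hyper X | 1/(n+1:ℝ) ≤ infDist q (K : Set X)} :=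
    isClosed_le continuous_const (lipschitz_infDist_set q).continuous
  exact h1.inter (h2.inter (isClosed_sepPts p q))

lemma sepFam_eq [LocallyConnectedSpace X] :
    SepFam X = ⋃ i : ℕ × ℕ × ℕ, Asep (denseSeq X i.1) (denseSeq X i.2.1) i.2.2 := by
  ext K
  simp only [SepFam, mem_setOf_eq, mem_iUnion]
  constructor
  · rintro ⟨hcl, U, V, hUo, hVo, ⟨u, hu⟩, ⟨v, hv⟩, hdUV, hcompl⟩
    have hUK : U ⊆ (K : Set X)ᶜ := hcompl ▸ subset_union_left
    have hVK : V ⊆ (K : Set X)ᶜ := hcompl ▸ subset_union_right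
    have hru : 0 < infDist u (K : Set X) :=
      (K.isCompact.isClosed.notMem_iff_infDist_pos K.nonempty).mp (hUK hu)
    have hrv : 0 < infDist v (K : Set X) :=
      (K.isCompact.isClosed.notMem_iff_infDist_pos K.nonempty).mp (hVK hv)
    obtain ⟨ρu, hρu, hballu⟩ := Metric.isOpen_iff.mp hUo u hu
    obtain ⟨ρv, hρv, hballv⟩ := Metric.isOpen_iff.mp hVo v hv
    obtain ⟨k, hk⟩ := (denseRange_denseSeq X).exists_dist_lt u
      (lt_min (half_pos hru) hρu)
    obtain ⟨l, hl⟩ := (denseRange_denseSeq X).exists_dist_lt v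
      (lt_min (half_pos hrv) hρv)
    set p := denseSeq X k with hp
    set q := denseSeq X l with hq
    have hpU : p ∈ U := hballu (mem_ball.mpr (by
      rw [dist_comm]; exact hk.trans_le (min_le_right _ _)))
    have hqV : q ∈ V := hballv (mem_ball.mpr (by
      rw [dist_comm]; exact hl.trans_le (min_le_right _ _)))
    have hpd : infDist u (K : Set X) / 2 ≤ infDist p (K : Set X) := by
      have h1 : infDist u (K : Set X) ≤ infDist p (K : Set X) + dist u p :=
        infDist_le_infDist_add_dist
      have h2 : dist u p < infDist u (K : Set X) / 2 := hk.trans_le (min_le_left _ _)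
      linarith
    have hqd : infDist v (K : Set X) / 2 ≤ infDist q (K : Set X) := by
      have h1 : infDist v (K : Set X) ≤ infDist q (K : Set X) + dist v q :=
        infDist_le_infDist_add_dist
      have h2 : dist v q < infDist v (K : Set X) / 2 := hl.trans_le (min_le_left _ _)
      linarith
    obtain ⟨n, hn⟩ := exists_nat_one_div_lt
      (lt_min (half_pos hru) (half_pos hrv))
    refine ⟨⟨k, l, n⟩, ?_, ?_, ?_⟩
    · exact le_trans (hn.le.trans (min_le_left _ _)) hpd
    · exact le_trans (hn.le.trans (min_le_right _ _)) hqd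
    · intro L hLpre hpL hqL hdisj
      have hLsub : L ⊆ U ∪ V := by
        intro x hx
        rw [← hcompl]
        exact fun hxK => disjoint_left.mp hdisj hx hxK
      obtain ⟨z, _, hzU, hzV⟩ :=
        hLpre U V hUo hVo hLsub ⟨p, hpL, hpU⟩ ⟨q, hqL, hqV⟩
      exact disjoint_left.mp hdUV hzU hzV
  · rintro ⟨⟨k, l, n⟩, hp1, hq1, hsep⟩
    set p := denseSeq X k with hp
    set q := denseSeq X l with hq
    have hpos : (0:ℝ) < 1/(n+1) := by positivity
    have hpK : p ∉ (K : Set X) :=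
      (K.isCompact.isClosed.notMem_iff_infDist_pos K.nonempty).mpr (hpos.trans_le hp1)
    have hqK : q ∉ (K : Set X) :=
      (K.isCompact.isClosed.notMem_iff_infDist_pos K.nonempty).mpr (hpos.trans_le hq1)
    have hKc : IsOpen (K : Set X)ᶜ := K.isCompact.isClosed.isOpen_compl
    set U : Set X := connectedComponentIn (K : Set X)ᶜ p with hU
    have hUo : IsOpen U := hKc.connectedComponentIn
    have hUsub : U ⊆ (K : Set X)ᶜ := connectedComponentIn_subset _ _
    have hpU : p ∈ U := mem_connectedComponentIn hpK
    have hqU : q ∉ U := by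
      intro hqU
      exact hsep U isPreconnected_connectedComponentIn hpU hqU
        (disjoint_left.mpr fun x hxU => hUsub hxU)
    have hVo : IsOpen ((K : Set X)ᶜ \ U) := by
      rw [isOpen_iff_forall_mem_open]
      rintro x ⟨hxK, hxU⟩
      refine ⟨connectedComponentIn (K : Set X)ᶜ x, ?_, hKc.connectedComponentIn,
        mem_connectedComponentIn hxK⟩
      intro y hy
      refine ⟨connectedComponentIn_subset _ _ hy, fun hyU => hxU ?_⟩
      have e1 : connectedComponentIn (K : Set X)ᶜ x = connectedComponentIn (K : Set X)ᶜ y :=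
        connectedComponentIn_eq hy
      have e2 : connectedComponentIn (K : Set X)ᶜ p = connectedComponentIn (K : Set X)ᶜ y :=
        connectedComponentIn_eq hyU
      rw [hU, e2, ← e1]
      exact mem_connectedComponentIn hxK
    exact ⟨K.isCompact.isClosed, U, (K : Set X)ᶜ \ U, hUo, hVo, ⟨p, hpU⟩,
      ⟨q, hqK, hqU⟩, Set.disjoint_sdiff_right, (union_diff_cancel hUsub).symm⟩

lemma nwdFam_eq :
    NwdFam X = (⋃ b ∈ {b ∈ countableBasis X | b.Nonempty},
      {K : Hyper X | b ⊆ (K : Set X)})ᶜ := by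
  ext K
  simp only [NwdFam, mem_setOf_eq, mem_compl_iff, mem_iUnion, mem_sep_iff,
    exists_prop, not_exists, not_and]
  rw [K.isCompact.isClosed.isNowhereDense_iff]
  constructor
  · rintro hint b ⟨hbB, x, hxb⟩ hsub
    have h1 : b ⊆ interior (K : Set X) :=
      interior_maximal hsub (isOpen_of_mem_countableBasis hbB)
    rw [hint] at h1
    exact h1 hxb
  · intro h
    by_contra hne
    obtain ⟨x, hx⟩ := nonempty_iff_ne_empty.mpr hne
    obtain ⟨b, hbB, hxb, hbsub⟩ :=
      (isBasis_countableBasis X).exists_subset_of_mem_open hx isOpen_interior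
    exact h b ⟨hbB, ⟨x, hxb⟩⟩ (hbsub.trans interior_subset)

end HyperLemmas

end Statement9Aux

/-- If `X` is a locally connected continuum, then the family
`S(X) ∩ N(X)` of nowhere dense closed separators of `X` is in `D_2(F_σ)` as a subset of
`2^X`, and `S(X) ∩ N(X) ∩ C(X)` is in `D_2(F_σ)` as a subset of `C(X)`. -/
theorem statement9 (X : Type) [MetricSpace X] [CompactSpace X] [ConnectedSpace X]
    [Nonempty X] [LocallyConnectedSpace X] :
    IsD2Fsigma (SepFam X ∩ NwdFam X) ∧
    IsD2Fsigma (SepSubcontFam X ∩ NwdSubcontFam X) := by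
  classical
  set F : Set (Hyper X) :=
    ⋃ i : ℕ × ℕ × ℕ, Asep (denseSeq X i.1) (denseSeq X i.2.1) i.2.2 with hFdef
  set G : Set (Hyper X) :=
    ⋃ b ∈ {b ∈ countableBasis X | b.Nonempty}, {K : Hyper X | b ⊆ (K : Set X)} with hGdef
  have hF : IsFsigma F := by
    have h := isFsigma_biUnion_countable (Set.countable_univ (α := ℕ × ℕ × ℕ))
      (fun i => Asep (denseSeq X i.1) (denseSeq X i.2.1) i.2.2)
      (fun i _ => isClosed_Asep _ _ _)
    rwa [Set.biUnion_univ] at h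
  have hG : IsFsigma G :=
    isFsigma_biUnion_countable ((countable_countableBasis X).mono (Set.sep_subset _ _))
      _ (fun b _ => isClosed_supset b)
  have h1 : IsD2Fsigma (SepFam X ∩ NwdFam X) :=
    ⟨F, G, hF, hG, by rw [sepFam_eq, nwdFam_eq, Set.diff_eq]⟩
  refine ⟨h1, ?_⟩
  obtain ⟨F', G', hF', hG', hEq⟩ := h1
  refine ⟨Subtype.val ⁻¹' F', Subtype.val ⁻¹' G',
    isFsigma_preimage continuous_subtype_val hF',
    isFsigma_preimage continuous_subtype_val hG', ?_⟩
  have h2 : SepSubcontFam X ∩ NwdSubcontFam X =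
      Subtype.val ⁻¹' (SepFam X ∩ NwdFam X) := rfl
  rw [h2, hEq, Set.preimage_diff]
end

section
/- For every compact locally connected metric space Y, the family of all strongly infinite-dimensional compacta contained in Y is an analytic subset of the hyperspace 2^Y. -/
open Topology TopologicalSpace Metric Set Filter

namespace S13
set_option linter.unusedSectionVars false

variable {Y : Type} [MetricSpace Y] [CompactSpace Y]

lemma hedist_ne_top (s t : Hyper Y) : EMetric.hausdorffEdist (s : Set Y) (t : Set Y) ≠ ⊤ :=
  Metric.hausdorffEdist_ne_top_of_nonempty_of_bounded s.nonempty t.nonempty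
    s.isCompact.isBounded t.isCompact.isBounded

lemma subset_thickening_of_dist_lt {s t : Hyper Y} {δ : ℝ} (h : dist s t < δ) :
    (s : Set Y) ⊆ Metric.thickening δ (t : Set Y) := by
  intro x hx
  rw [Metric.NonemptyCompacts.dist_eq] at h
  obtain ⟨y, hy, hxy⟩ := Metric.exists_dist_lt_of_hausdorffDist_lt hx h (hedist_ne_top s t)
  exact Metric.mem_thickening_iff.2 ⟨y, hy, hxy⟩

lemma exists_separatesBetween {Z : Type} [TopologicalSpace Z] [NormalSpace Z]
    {A B : Set Z} (hA : IsClosed A) (hB : IsClosed B) (hAB : Disjoint A B) :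
    ∃ C : Set Z, SeparatesBetween C A B := by
  obtain ⟨U, V, hU, hV, hAU, hBV, hUV⟩ := NormalSpace.normal A B hA hB hAB
  exact ⟨(U ∪ V)ᶜ, (hU.union hV).isClosed_compl, U, V, hU, hV, hAU, hBV, hUV,
    compl_compl _⟩

/-- The set of pairs `(s,t)` with `t ⊆ s` is closed in `2^Y × 2^Y`. -/
lemma subset_isClosed :
    IsClosed {q : Hyper Y × Hyper Y | (q.2 : Set Y) ⊆ (q.1 : Set Y)} := by
  rw [← isOpen_compl_iff]
  rw [Metric.isOpen_iff]
  rintro ⟨s, t⟩ hq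
  simp only [mem_compl_iff, mem_setOf_eq, Set.not_subset] at hq
  obtain ⟨x, hxt, hxs⟩ := hq
  have hc : 0 < infDist x (s : Set Y) :=
    (IsClosed.notMem_iff_infDist_pos s.isCompact.isClosed s.nonempty).1 hxs
  refine ⟨infDist x (s : Set Y) / 3, by linarith, ?_⟩
  rintro ⟨s', t'⟩ hball
  simp only [Metric.mem_ball, Prod.dist_eq, max_lt_iff] at hball
  obtain ⟨hs', ht'⟩ := hball
  simp only [mem_compl_iff, mem_setOf_eq, Set.not_subset]
  -- find x' ∈ t' close to x
  rw [Metric.NonemptyCompacts.dist_eq] at hs' ht'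
  obtain ⟨x', hx't', hxx'⟩ := Metric.exists_dist_lt_of_hausdorffDist_lt hxt
    (by rw [Metric.hausdorffDist_comm]; exact ht') (hedist_ne_top t t')
  refine ⟨x', hx't', fun hx's' => ?_⟩
  have h1 : infDist x (s : Set Y) ≤ infDist x' (s : Set Y) + dist x x' :=
    Metric.infDist_le_infDist_add_dist
  have h2 : infDist x' (s : Set Y) ≤ infDist x' (s' : Set Y) + hausdorffDist (s' : Set Y) s :=
    Metric.infDist_le_infDist_add_hausdorffDist (hedist_ne_top s' s)
  have h3 : infDist x' (s' : Set Y) = 0 := Metric.infDist_zero_of_mem hx's'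
  have h4 : hausdorffDist (s' : Set Y) (s : Set Y) < infDist x (s : Set Y) / 3 := hs'
  linarith

/-- The set of pairs `(s,t)` with `s`, `t` disjoint is open in `2^Y × 2^Y`. -/
lemma disjoint_isOpen :
    IsOpen {q : Hyper Y × Hyper Y | Disjoint (q.1 : Set Y) (q.2 : Set Y)} := by
  rw [isOpen_iff_forall_mem_open]
  rintro ⟨s, t⟩ hq
  simp only [mem_setOf_eq] at hq
  obtain ⟨δ, hδ, hδs⟩ := s.isCompact.exists_cthickening_subset_open
    t.isCompact.isClosed.isOpen_compl (Set.subset_compl_iff_disjoint_right.2 hq)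
  obtain ⟨δ', hδ', hδt⟩ := t.isCompact.exists_cthickening_subset_open
    (Metric.isClosed_cthickening (E := (s : Set Y))).isOpen_compl
    (fun y hy hyc => (hδs hyc) hy)
  refine ⟨(Metric.ball s δ) ×ˢ (Metric.ball t δ'), ?_, (Metric.isOpen_ball).prod Metric.isOpen_ball,
    by simp [hδ, hδ']⟩
  rintro ⟨s', t'⟩ ⟨hs', ht'⟩
  simp only [Metric.mem_ball] at hs' ht'
  simp only [mem_setOf_eq]
  have h1 : (s' : Set Y) ⊆ Metric.cthickening δ (s : Set Y) :=
    (subset_thickening_of_dist_lt hs').trans (Metric.thickening_subset_cthickening _ _)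
  have h2 : (t' : Set Y) ⊆ Metric.cthickening δ' (t : Set Y) :=
    (subset_thickening_of_dist_lt ht').trans (Metric.thickening_subset_cthickening _ _)
  have hdisj : Disjoint (Metric.cthickening δ (s : Set Y)) (Metric.cthickening δ' (t : Set Y)) :=
    (Set.subset_compl_iff_disjoint_right.1 hδt).symm
  exact hdisj.mono h1 h2

end S13

namespace S13
variable {Y : Type} [MetricSpace Y] [CompactSpace Y]

/-- The essentiality condition, expressed with continuous real functions on `Y`. -/
def Ess (K : Hyper Y) (A B : ℕ → Hyper Y) : Prop :=
  ∀ N : ℕ, ∀ f : ℕ → C(Y, ℝ),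
    (∀ n < N, (∀ y ∈ (A n : Set Y), f n y < 0) ∧ (∀ y ∈ (B n : Set Y), 0 < f n y)) →
    ∃ x ∈ (K : Set Y), ∀ n < N, f n x = 0

lemma ess_isClosed :
    IsClosed {p : Hyper Y × (ℕ → Hyper Y) × (ℕ → Hyper Y) | Ess p.1 p.2.1 p.2.2} := by
  rw [← isOpen_compl_iff, isOpen_iff_forall_mem_open]
  rintro p hp
  simp only [mem_compl_iff, mem_setOf_eq, Ess, not_forall] at hp
  obtain ⟨N, f, hf, hK⟩ := hp
  push_neg at hK
  -- hK : ∀ x ∈ p.1, ∃ n < N, f n x ≠ 0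
  -- find uniform thickening constants
  have hKopen : IsOpen {y : Y | ∃ n < N, f n y ≠ 0} := by
    have : {y : Y | ∃ n < N, f n y ≠ 0} = ⋃ n ∈ Finset.range N, {y | f n y ≠ 0} := by
      ext y; simp [Finset.mem_range]
    rw [this]
    exact isOpen_biUnion fun n _ => (isOpen_ne_fun (f n).continuous continuous_const)
  obtain ⟨δK, hδK, hδKsub⟩ := p.1.isCompact.exists_thickening_subset_open hKopen hK
  have hd : ∀ n, ∃ δ : ℝ, 0 < δ ∧ (n < N →
      Metric.thickening δ (p.2.1 n : Set Y) ⊆ {y | f n y < 0} ∧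
      Metric.thickening δ (p.2.2 n : Set Y) ⊆ {y | 0 < f n y}) := by
    intro n
    by_cases hn : n < N
    · obtain ⟨δ₁, hδ₁, h₁⟩ := (p.2.1 n).isCompact.exists_thickening_subset_open
        (isOpen_lt (f n).continuous continuous_const) (fun y hy => (hf n hn).1 y hy)
      obtain ⟨δ₂, hδ₂, h₂⟩ := (p.2.2 n).isCompact.exists_thickening_subset_open
        (isOpen_lt continuous_const (f n).continuous) (fun y hy => (hf n hn).2 y hy)
      refine ⟨min δ₁ δ₂, lt_min hδ₁ hδ₂, fun _ => ⟨?_, ?_⟩⟩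
      · exact (Metric.thickening_mono (min_le_left _ _) _).trans h₁
      · exact (Metric.thickening_mono (min_le_right _ _) _).trans h₂
    · exact ⟨1, one_pos, fun h => absurd h hn⟩
  choose d hd0 hdsub using hd
  rcases Nat.eq_zero_or_pos N with h0 | hN
  · -- impossible: K is nonempty
    exfalso
    obtain ⟨x, hx⟩ := p.1.nonempty
    obtain ⟨n, hn, -⟩ := hK x hx
    omega
  have hne : (Finset.range N).Nonempty := Finset.nonempty_range_iff.2 (by omega)
  set δ : ℝ := min δK ((Finset.range N).inf' hne d) with hδdef
  have hδpos : 0 < δ := lt_min hδK ((Finset.lt_inf'_iff hne).2 fun n _ => hd0 n)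
  -- the open neighbourhood of p
  refine ⟨{p' : Hyper Y × (ℕ → Hyper Y) × (ℕ → Hyper Y) | dist p'.1 p.1 < δ} ∩
      ⋂ n ∈ Finset.range N,
        ({p' | dist (p'.2.1 n) (p.2.1 n) < δ} ∩ {p' | dist (p'.2.2 n) (p.2.2 n) < δ}),
      ?_, ?_, ?_⟩
  · -- contained in the complement
    rintro p' ⟨h1, h2⟩
    simp only [Finset.mem_range, Set.mem_iInter, mem_inter_iff, mem_setOf_eq] at h1 h2
    simp only [mem_compl_iff, mem_setOf_eq, Ess, not_forall]
    refine ⟨N, f, fun n hn => ?_, ?_⟩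
    · have hδd : δ ≤ d n := le_trans (min_le_right _ _)
        (Finset.inf'_le d (Finset.mem_range.2 hn))
      constructor
      · intro y hy
        exact (hdsub n hn).1 <| Metric.thickening_mono hδd _ <|
          subset_thickening_of_dist_lt (h2 n hn).1 hy
      · intro y hy
        exact (hdsub n hn).2 <| Metric.thickening_mono hδd _ <|
          subset_thickening_of_dist_lt (h2 n hn).2 hy
    · push_neg
      intro x hx
      have : x ∈ Metric.thickening δK (p.1 : Set Y) :=
        Metric.thickening_mono (min_le_left _ _) _ (subset_thickening_of_dist_lt h1 hx)
      obtain ⟨n, hn, hfn⟩ := hδKsub this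
      exact ⟨n, hn, hfn⟩
  · -- openness
    refine IsOpen.inter ?_ (isOpen_biInter_finset fun n _ => IsOpen.inter ?_ ?_)
    · exact Metric.isOpen_ball.preimage continuous_fst
    · show IsOpen ((fun p' : Hyper Y × (ℕ → Hyper Y) × (ℕ → Hyper Y) => p'.2.1 n) ⁻¹'
        Metric.ball (p.2.1 n) δ)
      exact Metric.isOpen_ball.preimage ((continuous_apply n).comp
        (continuous_fst.comp continuous_snd))
    · show IsOpen ((fun p' : Hyper Y × (ℕ → Hyper Y) × (ℕ → Hyper Y) => p'.2.2 n) ⁻¹'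
        Metric.ball (p.2.2 n) δ)
      exact Metric.isOpen_ball.preimage ((continuous_apply n).comp
        (continuous_snd.comp continuous_snd))
  · -- contains p
    refine ⟨by simpa using hδpos, ?_⟩
    simp only [Set.mem_iInter, mem_inter_iff, mem_setOf_eq]
    intro n _
    simp [hδpos]

end S13

namespace S13
variable {Y : Type} [MetricSpace Y] [CompactSpace Y]

/-- The Borel set of triples `(K, A, B)` witnessing strong infinite-dimensionality. -/
def TT (Y : Type) [MetricSpace Y] [CompactSpace Y] :
    Set (Hyper Y × (ℕ → Hyper Y) × (ℕ → Hyper Y)) :=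
  {p | (∀ n, (p.2.1 n : Set Y) ⊆ (p.1 : Set Y) ∧ (p.2.2 n : Set Y) ⊆ (p.1 : Set Y) ∧
      Disjoint (p.2.1 n : Set Y) (p.2.2 n : Set Y)) ∧ Ess p.1 p.2.1 p.2.2}

/-- From a separator extract a sign-separating continuous function. -/
lemma separator_fun {Z : Type} [MetricSpace Z] {C A B : Set Z}
    (hsep : SeparatesBetween C A B) (hA : A.Nonempty) (hB : B.Nonempty) :
    ∃ g : C(Z, ℝ), (∀ z ∈ A, g z < 0) ∧ (∀ z ∈ B, 0 < g z) ∧ {z | g z = 0} ⊆ C := by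
  obtain ⟨hC, U, V, hU, hV, hAU, hBV, hUV, hCc⟩ := hsep
  have hUVc : U ⊆ Vᶜ := Set.subset_compl_iff_disjoint_right.2 hUV
  have hVUc : V ⊆ Uᶜ := Set.subset_compl_iff_disjoint_right.2 hUV.symm
  have hVcne : (Vᶜ).Nonempty := ⟨hA.choose, hUVc (hAU hA.choose_spec)⟩
  have hUcne : (Uᶜ).Nonempty := ⟨hB.choose, hVUc (hBV hB.choose_spec)⟩
  refine ⟨⟨fun z => infDist z Vᶜ - infDist z Uᶜ,
    (continuous_infDist_pt _).sub (continuous_infDist_pt _)⟩, ?_, ?_, ?_⟩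
  · intro z hz
    have h1 : infDist z Vᶜ = 0 := infDist_zero_of_mem (hUVc (hAU hz))
    have h2 : 0 < infDist z Uᶜ :=
      (IsClosed.notMem_iff_infDist_pos hU.isClosed_compl hUcne).1 (by simpa using hAU hz)
    simpa [h1] using h2
  · intro z hz
    have h1 : infDist z Uᶜ = 0 := infDist_zero_of_mem (hVUc (hBV hz))
    have h2 : 0 < infDist z Vᶜ :=
      (IsClosed.notMem_iff_infDist_pos hV.isClosed_compl hVcne).1 (by simpa using hBV hz)
    simpa [h1] using h2
  · intro z hz
    simp only [mem_setOf_eq, ContinuousMap.coe_mk, sub_eq_zero] at hz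
    by_contra hzC
    have : z ∈ U ∪ V := by rw [← hCc]; exact hzC
    rcases this with h | h
    · have h1 : infDist z Vᶜ = 0 := infDist_zero_of_mem (hUVc h)
      have h2 : 0 < infDist z Uᶜ :=
        (IsClosed.notMem_iff_infDist_pos hU.isClosed_compl hUcne).1 (by simpa using h)
      rw [h1] at hz; exact absurd hz.symm (ne_of_gt h2)
    · have h1 : infDist z Uᶜ = 0 := infDist_zero_of_mem (hVUc h)
      have h2 : 0 < infDist z Vᶜ :=
        (IsClosed.notMem_iff_infDist_pos hV.isClosed_compl hVcne).1 (by simpa using h)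
      rw [h1] at hz; exact absurd hz (ne_of_gt h2)

lemma sid_of_mem (p : Hyper Y × (ℕ → Hyper Y) × (ℕ → Hyper Y)) (hp : p ∈ TT Y) :
    StronglyInfiniteDimensional ↥(p.1 : Set Y) := by
  obtain ⟨K, A, B⟩ := p
  obtain ⟨hsub, hEss⟩ := hp
  simp only at hsub hEss ⊢
  haveI : CompactSpace ↥(K : Set Y) := isCompact_iff_compactSpace.1 K.isCompact
  refine ⟨fun n => Subtype.val ⁻¹' (A n : Set Y), fun n => Subtype.val ⁻¹' (B n : Set Y),
    fun n => ⟨((A n).isCompact.isClosed).preimage continuous_subtype_val,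
      ((B n).isCompact.isClosed).preimage continuous_subtype_val,
      Disjoint.preimage _ (hsub n).2.2⟩, ?_⟩
  intro C hC
  -- finite intersections are nonempty
  set D : ℕ → Set ↥(K : Set Y) := fun N => ⋂ n ∈ Finset.range (N + 1), C n with hD
  have hDC : (⋂ N, D N) = ⋂ n, C n := by
    ext z
    simp only [hD, Set.mem_iInter, Finset.mem_range]
    exact ⟨fun h n => h n n (by omega), fun h N n _ => h n⟩
  have hDnon : ∀ N, (D N).Nonempty := by
    intro N
    -- construct sign functions on K and extend them to Y
    have hAne : ∀ n, (Subtype.val ⁻¹' (A n : Set Y) : Set ↥(K : Set Y)).Nonempty := by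
      intro n
      obtain ⟨y, hy⟩ := (A n).nonempty
      exact ⟨⟨y, (hsub n).1 hy⟩, hy⟩
    have hBne : ∀ n, (Subtype.val ⁻¹' (B n : Set Y) : Set ↥(K : Set Y)).Nonempty := by
      intro n
      obtain ⟨y, hy⟩ := (B n).nonempty
      exact ⟨⟨y, (hsub n).2.1 hy⟩, hy⟩
    have hg : ∀ n, ∃ F : C(Y, ℝ), (∀ y ∈ (A n : Set Y), F y < 0) ∧
        (∀ y ∈ (B n : Set Y), 0 < F y) ∧ ∀ z : ↥(K : Set Y), F z = 0 → z ∈ C n := by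
      intro n
      obtain ⟨g, hg1, hg2, hg3⟩ := separator_fun (hC n) (hAne n) (hBne n)
      obtain ⟨F, hF⟩ := ContinuousMap.exists_restrict_eq (K.isCompact.isClosed) g
      have hFval : ∀ z : ↥(K : Set Y), F z = g z := fun z => DFunLike.congr_fun hF z
      refine ⟨F, ?_, ?_, ?_⟩
      · intro y hy
        have : F (⟨y, (hsub n).1 hy⟩ : ↥(K : Set Y)) = g ⟨y, (hsub n).1 hy⟩ := hFval _
        simpa [this] using hg1 _ hy
      · intro y hy
        have : F (⟨y, (hsub n).2.1 hy⟩ : ↥(K : Set Y)) = g ⟨y, (hsub n).2.1 hy⟩ := hFval _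
        simpa [this] using hg2 _ hy
      · intro z hz
        exact hg3 (by rw [mem_setOf_eq, ← hFval z]; exact hz)
    choose F hF1 hF2 hF3 using hg
    obtain ⟨x, hxK, hx⟩ := hEss (N + 1) F (fun n _ => ⟨hF1 n, hF2 n⟩)
    refine ⟨⟨x, hxK⟩, ?_⟩
    simp only [hD, Set.mem_iInter, Finset.mem_range]
    intro n hn
    exact hF3 n _ (hx n hn)
  rw [← hDC]
  refine IsCompact.nonempty_iInter_of_sequence_nonempty_isCompact_isClosed D ?_ hDnon ?_ ?_
  · intro N z hz
    simp only [hD, Set.mem_iInter, Finset.mem_range] at hz ⊢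
    intro n hn
    exact hz n (by omega)
  · exact ((isClosed_biInter (fun n _ => (hC n).1)).isCompact)
  · intro N
    exact isClosed_biInter (fun n _ => (hC n).1)

end S13

namespace S13
variable {Y : Type} [MetricSpace Y] [CompactSpace Y]

lemma mem_of_sid (K : Hyper Y) (h : StronglyInfiniteDimensional ↥(K : Set Y)) :
    ∃ A B : ℕ → Hyper Y, (K, A, B) ∈ TT Y := by
  haveI : CompactSpace ↥(K : Set Y) := isCompact_iff_compactSpace.1 K.isCompact
  obtain ⟨A₀, B₀, hcl, hess⟩ := h
  -- all the sets A₀ n, B₀ n are nonempty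
  have hne : ∀ n, (A₀ n).Nonempty ∧ (B₀ n).Nonempty := by
    intro n
    constructor
    · rw [Set.nonempty_iff_ne_empty]
      intro hA
      have : (⋂ m, (fun m => if m = n then (∅ : Set ↥(K : Set Y)) else
          (exists_separatesBetween (hcl m).1 (hcl m).2.1 (hcl m).2.2).choose) m).Nonempty := by
        apply hess
        intro m
        by_cases hm : m = n
        · subst hm
          simp only [if_pos rfl]
          exact ⟨isClosed_empty, ∅, Set.univ, isOpen_empty, isOpen_univ,
            by simp [hA], by simp, disjoint_bot_left, by simp⟩
        · simp only [if_neg hm]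
          exact (exists_separatesBetween (hcl m).1 (hcl m).2.1 (hcl m).2.2).choose_spec
      obtain ⟨z, hz⟩ := this
      have := Set.mem_iInter.1 hz n
      simp at this
    · rw [Set.nonempty_iff_ne_empty]
      intro hB
      have : (⋂ m, (fun m => if m = n then (∅ : Set ↥(K : Set Y)) else
          (exists_separatesBetween (hcl m).1 (hcl m).2.1 (hcl m).2.2).choose) m).Nonempty := by
        apply hess
        intro m
        by_cases hm : m = n
        · subst hm
          simp only [if_pos rfl]
          exact ⟨isClosed_empty, Set.univ, ∅, isOpen_univ, isOpen_empty,
            by simp, by simp [hB], disjoint_bot_right, by simp⟩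
        · simp only [if_neg hm]
          exact (exists_separatesBetween (hcl m).1 (hcl m).2.1 (hcl m).2.2).choose_spec
      obtain ⟨z, hz⟩ := this
      have := Set.mem_iInter.1 hz n
      simp at this
  -- the images in Y
  refine ⟨fun n => ⟨⟨Subtype.val '' A₀ n, ((hcl n).1.isCompact).image continuous_subtype_val⟩,
      (hne n).1.image _⟩,
    fun n => ⟨⟨Subtype.val '' B₀ n, ((hcl n).2.1.isCompact).image continuous_subtype_val⟩,
      (hne n).2.image _⟩, ⟨?_, ?_⟩⟩
  · intro n
    refine ⟨?_, ?_, ?_⟩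
    · rintro y ⟨z, _, rfl⟩; exact z.2
    · rintro y ⟨z, _, rfl⟩; exact z.2
    · exact (Set.disjoint_image_of_injective Subtype.coe_injective (hcl n).2.2)
  · -- essentiality
    intro N f hf
    set C : ℕ → Set ↥(K : Set Y) := fun n =>
      if n < N then {z | f n z.1 = 0}
      else (exists_separatesBetween (hcl n).1 (hcl n).2.1 (hcl n).2.2).choose with hCdef
    have hCsep : ∀ n, SeparatesBetween (C n) (A₀ n) (B₀ n) := by
      intro n
      by_cases hn : n < N
      · simp only [hCdef, if_pos hn]
        refine ⟨isClosed_eq ((f n).continuous.comp continuous_subtype_val) continuous_const,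
          {z | f n z.1 < 0}, {z | 0 < f n z.1},
          isOpen_lt ((f n).continuous.comp continuous_subtype_val) continuous_const,
          isOpen_lt continuous_const ((f n).continuous.comp continuous_subtype_val),
          ?_, ?_, ?_, ?_⟩
        · intro z hz
          exact (hf n hn).1 z.1 ⟨z, hz, rfl⟩
        · intro z hz
          exact (hf n hn).2 z.1 ⟨z, hz, rfl⟩
        · rw [Set.disjoint_left]
          intro z hz1 hz2
          simp only [mem_setOf_eq] at hz1 hz2
          linarith
        · ext z
          simp only [mem_compl_iff, mem_setOf_eq, Set.mem_union]
          exact ⟨fun h => (lt_or_gt_of_ne h).imp id id, fun h => by rcases h with h | h <;> linarith⟩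
      · simp only [hCdef, if_neg hn]
        exact (exists_separatesBetween (hcl n).1 (hcl n).2.1 (hcl n).2.2).choose_spec
    obtain ⟨z, hz⟩ := hess C hCsep
    refine ⟨z.1, z.2, ?_⟩
    intro n hn
    have := Set.mem_iInter.1 hz n
    simp only [hCdef, if_pos hn, mem_setOf_eq] at this
    exact this

end S13

/-- For every compact locally connected metric space `Y`, the family of
all strongly infinite-dimensional compacta contained in `Y` is an analytic subset of
`2^Y`. -/
theorem statement13 (Y : Type) [MetricSpace Y] [CompactSpace Y]
    [LocallyConnectedSpace Y] :
    MeasureTheory.AnalyticSet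
      {K : Hyper Y | StronglyInfiniteDimensional (K : Set Y)} := by
  classical
  letI : MeasurableSpace (Hyper Y × (ℕ → Hyper Y) × (ℕ → Hyper Y)) := borel _
  haveI : BorelSpace (Hyper Y × (ℕ → Hyper Y) × (ℕ → Hyper Y)) := ⟨rfl⟩
  have hTm : MeasurableSet (S13.TT Y) := by
    have hrw : S13.TT Y =
        (⋂ n : ℕ, ({p : Hyper Y × (ℕ → Hyper Y) × (ℕ → Hyper Y) |
            (p.2.1 n : Set Y) ⊆ (p.1 : Set Y)} ∩
          {p | (p.2.2 n : Set Y) ⊆ (p.1 : Set Y)} ∩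
          {p | Disjoint (p.2.1 n : Set Y) (p.2.2 n : Set Y)})) ∩
        {p | S13.Ess p.1 p.2.1 p.2.2} := by
      ext p
      constructor
      · rintro ⟨h1, h2⟩
        exact ⟨Set.mem_iInter.2 fun n => ⟨⟨(h1 n).1, (h1 n).2.1⟩, (h1 n).2.2⟩, h2⟩
      · rintro ⟨h1, h2⟩
        exact ⟨fun n => ⟨(Set.mem_iInter.1 h1 n).1.1, (Set.mem_iInter.1 h1 n).1.2,
          (Set.mem_iInter.1 h1 n).2⟩, h2⟩
    rw [hrw]
    refine MeasurableSet.inter (MeasurableSet.iInter fun n => ?_)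
      S13.ess_isClosed.measurableSet
    have c1 : Continuous (fun p : Hyper Y × (ℕ → Hyper Y) × (ℕ → Hyper Y) =>
        (p.1, p.2.1 n)) :=
      continuous_fst.prodMk ((continuous_apply n).comp (continuous_fst.comp continuous_snd))
    have c2 : Continuous (fun p : Hyper Y × (ℕ → Hyper Y) × (ℕ → Hyper Y) =>
        (p.1, p.2.2 n)) :=
      continuous_fst.prodMk ((continuous_apply n).comp (continuous_snd.comp continuous_snd))
    have c3 : Continuous (fun p : Hyper Y × (ℕ → Hyper Y) × (ℕ → Hyper Y) =>
        (p.2.1 n, p.2.2 n)) :=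
      ((continuous_apply n).comp (continuous_fst.comp continuous_snd)).prodMk
        ((continuous_apply n).comp (continuous_snd.comp continuous_snd))
    refine MeasurableSet.inter (MeasurableSet.inter ?_ ?_) ?_
    · exact (S13.subset_isClosed.preimage c1).measurableSet
    · exact (S13.subset_isClosed.preimage c2).measurableSet
    · exact (S13.disjoint_isOpen.preimage c3).measurableSet
  have himg : {K : Hyper Y | StronglyInfiniteDimensional (K : Set Y)} =
      Prod.fst '' S13.TT Y := by
    ext K
    simp only [mem_setOf_eq, Set.mem_image]
    constructor
    · intro h
      obtain ⟨A, B, hAB⟩ := S13.mem_of_sid K h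
      exact ⟨(K, A, B), hAB, rfl⟩
    · rintro ⟨p, hp, rfl⟩
      exact S13.sid_of_mem p hp
  rw [himg]
  exact hTm.analyticSet.image_of_continuous continuous_fst
end
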